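/- arXiv:2410.12684 — 5 statements merged into one kernel-verified Lean document; each statement's English description precedes it below -/
import Mathlib

section
/- Let ε ∈ (0,1]. For every d×d Hermitian matrix M with operator norm ‖M‖ ≤ 1 and all unit vectors ψ, φ ∈ ℂ^d, one has |Tr[M |ψ⟩⟨ψ| M |φ⟩⟨φ|] − Tr[M_ε |ψ⟩⟨ψ| M_ε |φ⟩⟨φ|]| ≤ ε/2; equivalently, ||⟨φ|M|ψ⟩|² − |⟨φ|M_ε|ψ⟩|²| ≤ ε/2. -/
open Matrix

noncomputable section

/-- The rank-one orthogonal projection `|ψ⟩⟨ψ|` associated to a vector `ψ ∈ ℂ^d`. -/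
def ketbra {d : ℕ} (ψ : EuclideanSpace ℂ (Fin d)) : Matrix (Fin d) (Fin d) ℂ :=
  Matrix.vecMulVec ψ (star (ψ : Fin d → ℂ))

/-- `⟨φ|M|ψ⟩`, the standard inner product of `φ` with `Mψ`. -/
def braM {d : ℕ} (φ : EuclideanSpace ℂ (Fin d)) (M : Matrix (Fin d) (Fin d) ℂ)
    (ψ : EuclideanSpace ℂ (Fin d)) : ℂ :=
  star (φ : Fin d → ℂ) ⬝ᵥ M.mulVec ψ

/-- The orthogonal projection `P_ε` onto the direct sum of the eigenspaces of the
Hermitian matrix `M` whose eigenvalue has absolute value at least `ε/2`. -/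
def specProj {d : ℕ} (M : Matrix (Fin d) (Fin d) ℂ) (hM : M.IsHermitian) (ε : ℝ) :
    Matrix (Fin d) (Fin d) ℂ :=
  (hM.eigenvectorUnitary : Matrix (Fin d) (Fin d) ℂ) *
    Matrix.diagonal (fun i => if ε / 2 ≤ |hM.eigenvalues i| then (1 : ℂ) else 0) *
    (hM.eigenvectorUnitary : Matrix (Fin d) (Fin d) ℂ)ᴴ

/-- The spectral truncation `M_ε := P_ε M P_ε`. -/
def truncation {d : ℕ} (M : Matrix (Fin d) (Fin d) ℂ) (hM : M.IsHermitian) (ε : ℝ) :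
    Matrix (Fin d) (Fin d) ℂ :=
  specProj M hM ε * M * specProj M hM ε

lemma endgame (ε P1 P2 Q1 Q2 A B C : ℝ) (hε0 : 0 < ε) (hε1 : ε ≤ 1)
    (hP1n : 0 ≤ P1) (hP2n : 0 ≤ P2) (hQ1n : 0 ≤ Q1) (hQ2n : 0 ≤ Q2)
    (hx1 : P1 ^ 2 + Q1 ^ 2 = 1) (hy1 : P2 ^ 2 + Q2 ^ 2 = 1)
    (hAn : 0 ≤ A) (hBn : 0 ≤ B) (hCn : 0 ≤ C)
    (hB : B ≤ P1 * P2) (hC : C ≤ ε / 2 * (Q1 * Q2))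
    (h1 : A ≤ B + C) (h2 : B ≤ A + C) :
    |A ^ 2 - B ^ 2| ≤ ε / 2 := by
  have hPQ1 : P1 * Q1 ≤ 1 / 2 := by nlinarith [sq_nonneg (P1 - Q1)]
  have hPQ2 : P2 * Q2 ≤ 1 / 2 := by nlinarith [sq_nonneg (P2 - Q2)]
  have ht0 : 0 ≤ Q1 * Q2 := mul_nonneg hQ1n hQ2n
  have hQ1le : Q1 ≤ 1 := by nlinarith [sq_nonneg (Q1 - 1), sq_nonneg P1]
  have hQ2le : Q2 ≤ 1 := by nlinarith [sq_nonneg (Q2 - 1), sq_nonneg P2]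
  have ht1 : Q1 * Q2 ≤ 1 := by nlinarith
  have hprod : (P1 * P2) * (Q1 * Q2) ≤ 1 / 4 := by
    have h := mul_le_mul hPQ1 hPQ2 (mul_nonneg hP2n hQ2n) (by norm_num : (0:ℝ) ≤ 1/2)
    nlinarith
  have h4 : ε * ((P1 * P2) * (Q1 * Q2)) ≤ ε * (1 / 4) :=
    mul_le_mul_of_nonneg_left hprod hε0.le
  have htt : (Q1 * Q2) * (Q1 * Q2) ≤ 1 := mul_le_one₀ ht1 ht0 ht1
  have hee : ε * ε ≤ ε := by nlinarith
  have h5' : (ε * ε) * ((Q1 * Q2) * (Q1 * Q2)) ≤ ε := by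
    calc (ε * ε) * ((Q1 * Q2) * (Q1 * Q2)) ≤ (ε * ε) * 1 :=
          mul_le_mul_of_nonneg_left htt (by positivity)
      _ = ε * ε := by ring
      _ ≤ ε := hee
  have h5 : (ε / 2 * (Q1 * Q2)) ^ 2 ≤ ε / 4 := by
    have hr : (ε / 2 * (Q1 * Q2)) ^ 2 = (ε * ε) * ((Q1 * Q2) * (Q1 * Q2)) / 4 := by ring
    linarith
  have key : C * (2 * B + C) ≤ ε / 2 := by
    calc C * (2 * B + C) ≤ (ε / 2 * (Q1 * Q2)) * (2 * (P1 * P2) + ε / 2 * (Q1 * Q2)) := by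
          apply mul_le_mul hC (by linarith) (by linarith) (by positivity)
      _ = ε * ((P1 * P2) * (Q1 * Q2)) + (ε / 2 * (Q1 * Q2)) ^ 2 := by ring
      _ ≤ ε * (1 / 4) + ε / 4 := by linarith
      _ = ε / 2 := by ring
  rw [abs_le]
  constructor
  · have e1 : B ^ 2 - A ^ 2 = (B - A) * (B + A) := by ring
    have e2 : (B - A) * (B + A) ≤ C * (B + A) :=
      mul_le_mul_of_nonneg_right (by linarith) (by linarith)
    have e3 : C * (B + A) ≤ C * (2 * B + C) :=
      mul_le_mul_of_nonneg_left (by linarith) hCn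
    linarith
  · have f1 : A * A ≤ (B + C) * (B + C) := mul_self_le_mul_self hAn h1
    have f2 : (B + C) * (B + C) = B ^ 2 + C * (2 * B + C) := by ring
    have f3 : A ^ 2 = A * A := sq A
    linarith

lemma core_sum {d : ℕ} (ε : ℝ) (hε0 : 0 < ε) (hε1 : ε ≤ 1)
    (lam : Fin d → ℝ) (hlam : ∀ i, |lam i| ≤ 1)
    (x y : Fin d → ℂ)
    (hx : ∑ i, ‖x i‖ ^ 2 = 1) (hy : ∑ i, ‖y i‖ ^ 2 = 1) :
    |‖∑ i, (lam i : ℂ) * star (x i) * y i‖ ^ 2 -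
      ‖∑ i, (if ε / 2 ≤ |lam i| then (lam i : ℂ) else 0) * star (x i) * y i‖ ^ 2|
      ≤ ε / 2 := by
  classical
  set S : Finset (Fin d) := Finset.univ.filter (fun i => ε / 2 ≤ |lam i|) with hS
  set b : ℂ := ∑ i ∈ S, (lam i : ℂ) * star (x i) * y i with hb
  set c : ℂ := ∑ i ∈ Sᶜ, (lam i : ℂ) * star (x i) * y i with hc
  have ha : (∑ i, (lam i : ℂ) * star (x i) * y i) = b + c := by
    rw [hb, hc, Finset.sum_add_sum_compl]
  have hbeq : (∑ i, (if ε / 2 ≤ |lam i| then (lam i : ℂ) else 0) * star (x i) * y i) = b := by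
    rw [hb, ← Finset.sum_add_sum_compl S]
    have h1 : ∑ i ∈ S, (if ε / 2 ≤ |lam i| then (lam i : ℂ) else 0) * star (x i) * y i
        = ∑ i ∈ S, (lam i : ℂ) * star (x i) * y i := by
      apply Finset.sum_congr rfl
      intro i hi
      rw [hS, Finset.mem_filter] at hi
      rw [if_pos hi.2]
    have h2 : ∑ i ∈ Sᶜ, (if ε / 2 ≤ |lam i| then (lam i : ℂ) else 0) * star (x i) * y i = 0 := by
      apply Finset.sum_eq_zero
      intro i hi
      rw [Finset.mem_compl, hS, Finset.mem_filter] at hi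
      push_neg at hi
      rw [if_neg (by simpa using hi), zero_mul, zero_mul]
    rw [h1, h2, add_zero]
  rw [ha, hbeq]
  set P1 : ℝ := Real.sqrt (∑ i ∈ S, ‖x i‖ ^ 2) with hP1
  set P2 : ℝ := Real.sqrt (∑ i ∈ S, ‖y i‖ ^ 2) with hP2
  set Q1 : ℝ := Real.sqrt (∑ i ∈ Sᶜ, ‖x i‖ ^ 2) with hQ1
  set Q2 : ℝ := Real.sqrt (∑ i ∈ Sᶜ, ‖y i‖ ^ 2) with hQ2
  have hP1n : 0 ≤ P1 := Real.sqrt_nonneg _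
  have hP2n : 0 ≤ P2 := Real.sqrt_nonneg _
  have hQ1n : 0 ≤ Q1 := Real.sqrt_nonneg _
  have hQ2n : 0 ≤ Q2 := Real.sqrt_nonneg _
  have hsq : ∀ (T : Finset (Fin d)) (z : Fin d → ℂ),
      Real.sqrt (∑ i ∈ T, ‖z i‖ ^ 2) ^ 2 = ∑ i ∈ T, ‖z i‖ ^ 2 := by
    intro T z
    exact Real.sq_sqrt (Finset.sum_nonneg fun i _ => by positivity)
  have hx1 : P1 ^ 2 + Q1 ^ 2 = 1 := by
    rw [hP1, hQ1, hsq, hsq, Finset.sum_add_sum_compl, hx]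
  have hy1 : P2 ^ 2 + Q2 ^ 2 = 1 := by
    rw [hP2, hQ2, hsq, hsq, Finset.sum_add_sum_compl, hy]
  have habs : ∀ i, ‖(lam i : ℂ) * star (x i) * y i‖
      = |lam i| * (‖x i‖ * ‖y i‖) := by
    intro i
    rw [norm_mul, norm_mul]
    simp [Complex.norm_real, Complex.star_def, Complex.norm_conj, mul_assoc]
  have hCS : ∀ (T : Finset (Fin d)),
      ∑ i ∈ T, ‖x i‖ * ‖y i‖
        ≤ Real.sqrt (∑ i ∈ T, ‖x i‖ ^ 2) *
          Real.sqrt (∑ i ∈ T, ‖y i‖ ^ 2) :=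
    fun T => Real.sum_mul_le_sqrt_mul_sqrt T _ _
  have hB : ‖b‖ ≤ P1 * P2 := by
    calc ‖b‖ ≤ ∑ i ∈ S, ‖(lam i : ℂ) * star (x i) * y i‖ :=
          norm_sum_le _ _
      _ ≤ ∑ i ∈ S, ‖x i‖ * ‖y i‖ := by
          apply Finset.sum_le_sum
          intro i _
          rw [habs]
          nlinarith [mul_nonneg (norm_nonneg (x i)) (norm_nonneg (y i)),
            hlam i, abs_nonneg (lam i)]
      _ ≤ P1 * P2 := hCS S
  have hC : ‖c‖ ≤ ε / 2 * (Q1 * Q2) := by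
    calc ‖c‖ ≤ ∑ i ∈ Sᶜ, ‖(lam i : ℂ) * star (x i) * y i‖ :=
          norm_sum_le _ _
      _ ≤ ∑ i ∈ Sᶜ, ε / 2 * (‖x i‖ * ‖y i‖) := by
          apply Finset.sum_le_sum
          intro i hi
          rw [habs]
          rw [Finset.mem_compl, hS, Finset.mem_filter] at hi
          push_neg at hi
          have h2 : |lam i| ≤ ε / 2 := le_of_lt (by simpa using hi)
          nlinarith [mul_nonneg (norm_nonneg (x i)) (norm_nonneg (y i)),
            abs_nonneg (lam i)]
      _ = ε / 2 * ∑ i ∈ Sᶜ, ‖x i‖ * ‖y i‖ := by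
          rw [Finset.mul_sum]
      _ ≤ ε / 2 * (Q1 * Q2) := by
          have := hCS Sᶜ
          nlinarith
  exact endgame ε P1 P2 Q1 Q2 (‖b + c‖) (‖b‖) (‖c‖)
    hε0 hε1 hP1n hP2n hQ1n hQ2n hx1 hy1 (norm_nonneg _) (norm_nonneg _)
    (norm_nonneg _) hB hC (norm_add_le _ _) (by
      have h : b = (b + c) + (-c) := by ring
      calc ‖b‖ = ‖(b + c) + (-c)‖ := by rw [← h]
        _ ≤ ‖b + c‖ + ‖-c‖ := norm_add_le _ _
        _ = ‖b + c‖ + ‖c‖ := by rw [norm_neg]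
      )

lemma braM_form {d : ℕ} (φ ψ : EuclideanSpace ℂ (Fin d)) (U : Matrix (Fin d) (Fin d) ℂ)
    (f : Fin d → ℂ) :
    braM φ (U * Matrix.diagonal f * Uᴴ) ψ =
      ∑ i, f i * star ((Uᴴ *ᵥ (φ : Fin d → ℂ)) i) * ((Uᴴ *ᵥ (ψ : Fin d → ℂ)) i) := by
  unfold braM
  rw [← mulVec_mulVec, ← mulVec_mulVec, dotProduct_mulVec]
  have hsv : star ((φ : Fin d → ℂ)) ᵥ* U = star (Uᴴ *ᵥ (φ : Fin d → ℂ)) := by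
    rw [star_mulVec, conjTranspose_conjTranspose]
  rw [hsv]
  simp [dotProduct, mulVec_diagonal]
  apply Finset.sum_congr rfl
  intro i _
  ring

lemma dot_self_eq {d : ℕ} (v : Fin d → ℂ) :
    star v ⬝ᵥ v = ((∑ i, ‖v i‖ ^ 2 : ℝ) : ℂ) := by
  push_cast
  simp only [dotProduct, Pi.star_apply, Complex.star_def]
  apply Finset.sum_congr rfl
  intro i _
  rw [mul_comm, Complex.mul_conj, Complex.normSq_eq_norm_sq, Complex.ofReal_pow]

lemma sum_abs_sq_mulVec {d : ℕ} (U : Matrix.unitaryGroup (Fin d) ℂ)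
    (φ : EuclideanSpace ℂ (Fin d)) (hφ : ‖φ‖ = 1) :
    ∑ i, ‖((U : Matrix (Fin d) (Fin d) ℂ)ᴴ *ᵥ (φ : Fin d → ℂ)) i‖ ^ 2 = 1 := by
  set x : Fin d → ℂ := (U : Matrix (Fin d) (Fin d) ℂ)ᴴ *ᵥ (φ : Fin d → ℂ) with hx
  have e1 : star x ⬝ᵥ x = star (φ : Fin d → ℂ) ⬝ᵥ (φ : Fin d → ℂ) := by
    rw [hx, star_mulVec, conjTranspose_conjTranspose, ← dotProduct_mulVec, mulVec_mulVec,
      ← Matrix.star_eq_conjTranspose, Matrix.mem_unitaryGroup_iff.mp U.2, one_mulVec]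
  have e2 : ∑ i, ‖(φ : Fin d → ℂ) i‖ ^ 2 = 1 := by
    have h := congrArg (· ^ 2) hφ
    simp only [EuclideanSpace.norm_eq] at h
    rw [Real.sq_sqrt (Finset.sum_nonneg fun i _ => by positivity)] at h
    simpa using h
  have := (dot_self_eq x).symm.trans (e1.trans (dot_self_eq (φ : Fin d → ℂ)))
  have h3 : ∑ i, ‖x i‖ ^ 2 = ∑ i, ‖(φ : Fin d → ℂ) i‖ ^ 2 := by
    exact_mod_cast this
  rw [h3, e2]

lemma ketbra_mulVec {d : ℕ} (ψ : EuclideanSpace ℂ (Fin d)) (u : Fin d → ℂ) :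
    ketbra ψ *ᵥ u = (star (ψ : Fin d → ℂ) ⬝ᵥ u) • (ψ : Fin d → ℂ) := by
  funext i
  simp only [ketbra, mulVec, vecMulVec_apply, dotProduct, Pi.smul_apply, PiLp.smul_apply,
    Pi.star_apply, smul_eq_mul]
  rw [Finset.sum_mul]
  apply Finset.sum_congr rfl
  intro j _
  ring

lemma trace_mul_ketbra {d : ℕ} (X : Matrix (Fin d) (Fin d) ℂ) (φ : EuclideanSpace ℂ (Fin d)) :
    Matrix.trace (X * ketbra φ) = star (φ : Fin d → ℂ) ⬝ᵥ (X *ᵥ (φ : Fin d → ℂ)) := by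
  simp only [Matrix.trace, Matrix.diag, Matrix.mul_apply, ketbra, vecMulVec_apply, dotProduct,
    mulVec, Pi.star_apply]
  apply Finset.sum_congr rfl
  intro i _
  rw [Finset.mul_sum]
  apply Finset.sum_congr rfl
  intro j _
  ring

lemma trace_ketbra_eq {d : ℕ} (A B : Matrix (Fin d) (Fin d) ℂ) (ψ φ : EuclideanSpace ℂ (Fin d)) :
    Matrix.trace (A * ketbra ψ * B * ketbra φ) = braM ψ B φ * braM φ A ψ := by
  rw [trace_mul_ketbra, braM, braM]
  rw [← mulVec_mulVec, ← mulVec_mulVec, ketbra_mulVec, mulVec_smul, dotProduct_smul]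
  rw [smul_eq_mul]

lemma braM_conj {d : ℕ} (A : Matrix (Fin d) (Fin d) ℂ) (hA : A.IsHermitian)
    (ψ φ : EuclideanSpace ℂ (Fin d)) :
    braM ψ A φ = star (braM φ A ψ) := by
  rw [braM, braM, star_dotProduct]
  congr 1
  rw [star_mulVec, ← dotProduct_mulVec, hA.eq]

lemma conj_mul_conj {d : ℕ} (U : Matrix.unitaryGroup (Fin d) ℂ)
    (A B : Matrix (Fin d) (Fin d) ℂ) :
    ((U : Matrix (Fin d) (Fin d) ℂ) * A * (U : Matrix (Fin d) (Fin d) ℂ)ᴴ) *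
      ((U : Matrix (Fin d) (Fin d) ℂ) * B * (U : Matrix (Fin d) (Fin d) ℂ)ᴴ) =
      (U : Matrix (Fin d) (Fin d) ℂ) * (A * B) * (U : Matrix (Fin d) (Fin d) ℂ)ᴴ := by
  have hUU : (U : Matrix (Fin d) (Fin d) ℂ)ᴴ * (U : Matrix (Fin d) (Fin d) ℂ) = 1 := by
    rw [← Matrix.star_eq_conjTranspose]
    exact Matrix.UnitaryGroup.star_mul_self U
  have h : ((U : Matrix (Fin d) (Fin d) ℂ) * A * (U : Matrix (Fin d) (Fin d) ℂ)ᴴ) *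
      ((U : Matrix (Fin d) (Fin d) ℂ) * B * (U : Matrix (Fin d) (Fin d) ℂ)ᴴ) =
      (U : Matrix (Fin d) (Fin d) ℂ) * A *
        (((U : Matrix (Fin d) (Fin d) ℂ)ᴴ * (U : Matrix (Fin d) (Fin d) ℂ)) *
          (B * (U : Matrix (Fin d) (Fin d) ℂ)ᴴ)) := by
    simp only [Matrix.mul_assoc]
  rw [h, hUU, Matrix.one_mul]
  simp only [Matrix.mul_assoc]

lemma M_form {d : ℕ} (M : Matrix (Fin d) (Fin d) ℂ) (hM : M.IsHermitian) :
    M = (hM.eigenvectorUnitary : Matrix (Fin d) (Fin d) ℂ) *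
      Matrix.diagonal (fun i => (hM.eigenvalues i : ℂ)) *
      (hM.eigenvectorUnitary : Matrix (Fin d) (Fin d) ℂ)ᴴ := by
  conv_lhs => rw [hM.spectral_theorem]
  rfl

lemma truncation_form {d : ℕ} (M : Matrix (Fin d) (Fin d) ℂ) (hM : M.IsHermitian) (ε : ℝ) :
    truncation M hM ε = (hM.eigenvectorUnitary : Matrix (Fin d) (Fin d) ℂ) *
      Matrix.diagonal (fun i => if ε / 2 ≤ |hM.eigenvalues i| then (hM.eigenvalues i : ℂ) else 0) *
      (hM.eigenvectorUnitary : Matrix (Fin d) (Fin d) ℂ)ᴴ := by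
  rw [truncation, specProj]
  set U := (hM.eigenvectorUnitary : Matrix (Fin d) (Fin d) ℂ) with hU
  set lam := hM.eigenvalues with hlamdef
  have hMf := M_form M hM
  rw [← hU, ← hlamdef] at hMf
  conv_lhs => rw [hMf]
  rw [show U = (hM.eigenvectorUnitary : Matrix (Fin d) (Fin d) ℂ) from hU] at *
  rw [conj_mul_conj, conj_mul_conj, Matrix.diagonal_mul_diagonal, Matrix.diagonal_mul_diagonal]
  congr 1
  congr 1
  funext i j
  by_cases h : ε / 2 ≤ |lam i| <;> simp [Matrix.diagonal_apply, h]

lemma eig_bound {d : ℕ} (M : Matrix (Fin d) (Fin d) ℂ) (hM : M.IsHermitian)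
    (hMnorm : ‖Matrix.toEuclideanCLM (𝕜 := ℂ) M‖ ≤ 1) (i : Fin d) :
    |hM.eigenvalues i| ≤ 1 := by
  set v : EuclideanSpace ℂ (Fin d) := hM.eigenvectorBasis i with hv
  have hvn : ‖v‖ = 1 := hM.eigenvectorBasis.orthonormal.1 i
  have happ : Matrix.toEuclideanCLM (𝕜 := ℂ) M v = (hM.eigenvalues i : ℂ) • v := by
    apply WithLp.ofLp_injective 2
    rw [Matrix.ofLp_toEuclideanCLM]
    simp only [WithLp.ofLp_smul]
    exact hM.mulVec_eigenvectorBasis i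
  have h2 : ‖Matrix.toEuclideanCLM (𝕜 := ℂ) M v‖ = |hM.eigenvalues i| := by
    rw [happ, norm_smul, hvn, mul_one, Complex.norm_real, Real.norm_eq_abs]
  have h3 : ‖Matrix.toEuclideanCLM (𝕜 := ℂ) M v‖ ≤ ‖Matrix.toEuclideanCLM (𝕜 := ℂ) M‖ * ‖v‖ :=
    ContinuousLinearMap.le_opNorm _ _
  rw [hvn, mul_one] at h3
  linarith

lemma truncation_isHermitian {d : ℕ} (M : Matrix (Fin d) (Fin d) ℂ) (hM : M.IsHermitian)
    (ε : ℝ) : (truncation M hM ε).IsHermitian := by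
  rw [truncation_form]
  apply Matrix.isHermitian_mul_mul_conjTranspose
  rw [Matrix.IsHermitian, Matrix.diagonal_conjTranspose]
  refine congrArg Matrix.diagonal ?_
  funext i
  by_cases h : ε / 2 ≤ |hM.eigenvalues i| <;> simp [h]

lemma trace_eq_abs_sq {d : ℕ} (A : Matrix (Fin d) (Fin d) ℂ) (hA : A.IsHermitian)
    (ψ φ : EuclideanSpace ℂ (Fin d)) :
    Matrix.trace (A * ketbra ψ * A * ketbra φ) = ((‖braM φ A ψ‖ ^ 2 : ℝ) : ℂ) := by
  rw [trace_ketbra_eq A A ψ φ, braM_conj A hA ψ φ, Complex.star_def, mul_comm,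
    Complex.mul_conj, Complex.normSq_eq_norm_sq, Complex.ofReal_pow]

/-- For `ε ∈ (0,1]`, a Hermitian `M` with operator norm at most `1`,
and unit vectors `ψ, φ`, we have
`|Tr[M|ψ⟩⟨ψ|M|φ⟩⟨φ|] − Tr[M_ε|ψ⟩⟨ψ|M_ε|φ⟩⟨φ|]| ≤ ε/2`, equivalently
`||⟨φ|M|ψ⟩|² − |⟨φ|M_ε|ψ⟩|²| ≤ ε/2`. -/
theorem truncation_trace_close {d : ℕ} (ε : ℝ) (hε0 : 0 < ε) (hε1 : ε ≤ 1)
    (M : Matrix (Fin d) (Fin d) ℂ) (hM : M.IsHermitian)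
    (hMnorm : ‖Matrix.toEuclideanCLM (𝕜 := ℂ) M‖ ≤ 1)
    (ψ φ : EuclideanSpace ℂ (Fin d)) (hψ : ‖ψ‖ = 1) (hφ : ‖φ‖ = 1) :
    ‖(Matrix.trace (M * ketbra ψ * M * ketbra φ) -
          Matrix.trace (truncation M hM ε * ketbra ψ * truncation M hM ε * ketbra φ))‖ ≤
      ε / 2 ∧
    |‖braM φ M ψ‖ ^ 2 - ‖braM φ (truncation M hM ε) ψ‖ ^ 2| ≤
      ε / 2 := by
  have hlam : ∀ i, |hM.eigenvalues i| ≤ 1 := eig_bound M hM hMnorm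
  set x : Fin d → ℂ := (hM.eigenvectorUnitary : Matrix (Fin d) (Fin d) ℂ)ᴴ *ᵥ (φ : Fin d → ℂ)
    with hxdef
  set y : Fin d → ℂ := (hM.eigenvectorUnitary : Matrix (Fin d) (Fin d) ℂ)ᴴ *ᵥ (ψ : Fin d → ℂ)
    with hydef
  have hx : ∑ i, ‖x i‖ ^ 2 = 1 := sum_abs_sq_mulVec hM.eigenvectorUnitary φ hφ
  have hy : ∑ i, ‖y i‖ ^ 2 = 1 := sum_abs_sq_mulVec hM.eigenvectorUnitary ψ hψ
  have ha : braM φ M ψ = ∑ i, (hM.eigenvalues i : ℂ) * star (x i) * y i := by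
    conv_lhs => rw [M_form M hM]
    exact braM_form φ ψ _ _
  have hbform : braM φ (truncation M hM ε) ψ =
      ∑ i, (if ε / 2 ≤ |hM.eigenvalues i| then (hM.eigenvalues i : ℂ) else 0) *
        star (x i) * y i := by
    rw [truncation_form, braM_form]
  have part2 : |‖braM φ M ψ‖ ^ 2 -
      ‖braM φ (truncation M hM ε) ψ‖ ^ 2| ≤ ε / 2 := by
    rw [ha, hbform]
    exact core_sum ε hε0 hε1 hM.eigenvalues hlam x y hx hy
  refine ⟨?_, part2⟩
  rw [trace_eq_abs_sq M hM ψ φ,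
    trace_eq_abs_sq (truncation M hM ε) (truncation_isHermitian M hM ε) ψ φ,
    ← Complex.ofReal_sub, Complex.norm_real, Real.norm_eq_abs]
  exact part2
end
end

section
/- Let ε ∈ (0,1]. For every d×d Hermitian matrix M with operator norm ‖M‖ ≤ 1, the operator norm of the Kronecker-product difference satisfies ‖M ⊗ Mᵀ − M_ε ⊗ M_εᵀ‖ ≤ ε/2. -/
open Matrix
open scoped Kronecker Matrix.Norms.L2Operator

noncomputable section

lemma diag_opNorm_le {n : Type*} [Fintype n] [DecidableEq n] (f : n → ℂ) {c : ℝ} (hc : 0 ≤ c)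
    (hf : ∀ i, ‖f i‖ ≤ c) : ‖Matrix.diagonal f‖ ≤ c := by
  rw [Matrix.l2_opNorm_def]
  apply ContinuousLinearMap.opNorm_le_bound _ hc
  intro x
  simp only [LinearEquiv.trans_apply, LinearMap.coe_toContinuousLinearMap',
    Matrix.toEuclideanLin_apply]
  rw [EuclideanSpace.norm_eq, EuclideanSpace.norm_eq]
  rw [← Real.sqrt_sq hc, ← Real.sqrt_mul (by positivity)]
  apply Real.sqrt_le_sqrt
  rw [Finset.mul_sum]
  apply Finset.sum_le_sum
  intro i _
  have h1 : ((WithLp.equiv 2 ((i:n) → ℂ)).symm ((Matrix.diagonal f) *ᵥ (WithLp.equiv 2 _) x)) i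
      = f i * x i := by
    rw [show ((WithLp.equiv 2 ((i:n) → ℂ)).symm ((Matrix.diagonal f) *ᵥ (WithLp.equiv 2 _) x)) i
      = ((Matrix.diagonal f) *ᵥ (WithLp.equiv 2 _) x) i from rfl, Matrix.mulVec_diagonal]
    rfl
  rw [show (WithLp.toLp 2 (diagonal f *ᵥ x.ofLp)).ofLp i = f i * x i from h1, norm_mul, mul_pow]
  exact mul_le_mul_of_nonneg_right (pow_le_pow_left₀ (norm_nonneg _) (hf i) 2) (sq_nonneg _)

lemma entry_le_diag_opNorm {n : Type*} [Fintype n] [DecidableEq n] (f : n → ℂ) (i : n) :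
    ‖f i‖ ≤ ‖Matrix.diagonal f‖ := by
  have h := Matrix.l2_opNorm_mulVec (Matrix.diagonal f) (EuclideanSpace.single i 1)
  rw [EuclideanSpace.norm_single, norm_one, mul_one] at h
  refine le_trans (le_of_eq ?_) h
  have key : (EuclideanSpace.equiv n ℂ).symm ((Matrix.diagonal f) *ᵥ (EuclideanSpace.single i (1:ℂ)))
      = EuclideanSpace.single i (f i) := by
    ext j
    have h1 : ((EuclideanSpace.equiv n ℂ).symm ((Matrix.diagonal f) *ᵥ (EuclideanSpace.single i (1:ℂ)))) j
        = ((Matrix.diagonal f) *ᵥ (EuclideanSpace.single i (1:ℂ))) j := rfl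
    rw [h1, Matrix.mulVec_diagonal, EuclideanSpace.single_apply, EuclideanSpace.single_apply]
    by_cases hj : j = i <;> simp [hj]
  rw [key, EuclideanSpace.norm_single]

lemma kron_conjTranspose {m n : Type*} (A : Matrix m m ℂ) (B : Matrix n n ℂ) :
    (A ⊗ₖ B)ᴴ = Aᴴ ⊗ₖ Bᴴ := by
  ext ⟨i, k⟩ ⟨j, l⟩
  simp [Matrix.conjTranspose_apply, Matrix.kroneckerMap_apply, star_mul']


/-- For `ε ∈ (0,1]` and a Hermitian `M` with operator norm `‖M‖ ≤ 1`,
the L2 operator norm of the Kronecker-product difference satisfies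
`‖M ⊗ Mᵀ − M_ε ⊗ M_εᵀ‖ ≤ ε/2`. (Norms here are L2 operator norms.) -/
theorem kronecker_truncation_opNorm_le {d : ℕ} (ε : ℝ) (hε0 : 0 < ε) (hε1 : ε ≤ 1)
    (M : Matrix (Fin d) (Fin d) ℂ) (hM : M.IsHermitian) (hMnorm : ‖M‖ ≤ 1) :
    ‖M ⊗ₖ Mᵀ - truncation M hM ε ⊗ₖ (truncation M hM ε)ᵀ‖ ≤ ε / 2 := by
  set U : Matrix (Fin d) (Fin d) ℂ := (hM.eigenvectorUnitary : Matrix (Fin d) (Fin d) ℂ) with hU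
  have hmem := hM.eigenvectorUnitary.prop
  rw [Unitary.mem_iff] at hmem
  have hUU : Uᴴ * U = 1 := by rw [← Matrix.star_eq_conjTranspose]; exact hmem.1
  have hUU' : U * Uᴴ = 1 := by rw [← Matrix.star_eq_conjTranspose]; exact hmem.2
  set lam : Fin d → ℝ := hM.eigenvalues with hlam
  -- eigenvalue bound
  have hDlam : Uᴴ * M * U = Matrix.diagonal ((RCLike.ofReal : ℝ → ℂ) ∘ lam) := by
    rw [← Matrix.star_eq_conjTranspose]
    have h := hM.conjStarAlgAut_star_eigenvectorUnitary
    rw [Unitary.conjStarAlgAut_star_apply] at h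
    exact h
  have hnormD : ‖Matrix.diagonal ((RCLike.ofReal : ℝ → ℂ) ∘ lam)‖ ≤ 1 := by
    rw [← hDlam, mul_assoc]
    calc ‖Uᴴ * (M * U)‖ = ‖M * U‖ := by
          rw [← Matrix.star_eq_conjTranspose]
          exact CStarRing.norm_coe_unitary_mul (star hM.eigenvectorUnitary) (M * U)
      _ = ‖M‖ := CStarRing.norm_mul_coe_unitary M hM.eigenvectorUnitary
      _ ≤ 1 := hMnorm
  have hev : ∀ i, |lam i| ≤ 1 := by
    intro i
    have := entry_le_diag_opNorm ((RCLike.ofReal : ℝ → ℂ) ∘ lam) i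
    simpa using this.trans hnormD
  set g : Fin d → ℂ := fun i => if ε/2 ≤ |lam i| then ((lam i : ℂ)) else 0 with hg
  set χ : Fin d → ℂ := fun i => if ε / 2 ≤ |hM.eigenvalues i| then (1 : ℂ) else 0 with hχ
  have hspec : M = U * Matrix.diagonal ((RCLike.ofReal : ℝ → ℂ) ∘ lam) * Uᴴ := by
    rw [← Matrix.star_eq_conjTranspose]
    have h := hM.spectral_theorem
    rw [Unitary.conjStarAlgAut_apply] at h
    exact h
  have htrunc : truncation M hM ε = U * Matrix.diagonal g * Uᴴ := by
    have h1 : truncation M hM ε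
        = U * (Matrix.diagonal χ * (Uᴴ * M * U) * Matrix.diagonal χ) * Uᴴ := by
      rw [truncation, specProj, ← hU, ← hχ]
      simp only [Matrix.mul_assoc]
    have hfun : (fun i => χ i * (RCLike.ofReal ∘ lam) i * χ i) = g := by
      funext i
      by_cases hi : ε/2 ≤ |lam i| <;> simp [hg, hχ, hlam, hi] <;> intro h h' <;> linarith
    rw [h1, hDlam, Matrix.diagonal_mul_diagonal, Matrix.diagonal_mul_diagonal, hfun]
  -- Kronecker machinery
  set V : Matrix (Fin d × Fin d) (Fin d × Fin d) ℂ := U ⊗ₖ (Uᴴ)ᵀ with hV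
  have hUHT : ((Uᴴ)ᵀ)ᴴ = Uᵀ := by
    ext i j
    simp [Matrix.conjTranspose_apply, Matrix.transpose_apply]
  have hVH : Vᴴ = Uᴴ ⊗ₖ Uᵀ := by
    rw [hV, kron_conjTranspose, hUHT]
  have hVmem : V ∈ unitary (Matrix (Fin d × Fin d) (Fin d × Fin d) ℂ) := by
    rw [Unitary.mem_iff, Matrix.star_eq_conjTranspose, hVH, hV]
    constructor
    · rw [← Matrix.mul_kronecker_mul, hUU, ← Matrix.transpose_mul, hUU, Matrix.transpose_one,
        Matrix.one_kronecker_one]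
    · rw [← Matrix.mul_kronecker_mul, hUU', ← Matrix.transpose_mul, hUU', Matrix.transpose_one,
        Matrix.one_kronecker_one]
  have conj_kron : ∀ f : Fin d → ℂ,
      (U * Matrix.diagonal f * Uᴴ) ⊗ₖ (U * Matrix.diagonal f * Uᴴ)ᵀ
        = V * Matrix.diagonal (fun p : Fin d × Fin d => f p.1 * f p.2) * Vᴴ := by
    intro f
    have h2 : (U * Matrix.diagonal f * Uᴴ)ᵀ = (Uᴴ)ᵀ * Matrix.diagonal f * Uᵀ := by
      rw [Matrix.transpose_mul, Matrix.transpose_mul, Matrix.diagonal_transpose,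
        Matrix.mul_assoc]
    rw [h2, Matrix.mul_kronecker_mul, Matrix.mul_kronecker_mul,
      Matrix.diagonal_kronecker_diagonal, hVH]
  have hdiff : M ⊗ₖ Mᵀ - truncation M hM ε ⊗ₖ (truncation M hM ε)ᵀ
      = V * Matrix.diagonal (fun p : Fin d × Fin d =>
          ((lam p.1 : ℂ) * (lam p.2 : ℂ)) - g p.1 * g p.2) * Vᴴ := by
    rw [htrunc]
    conv_lhs => rw [hspec]
    rw [conj_kron, conj_kron, ← Matrix.sub_mul, ← Matrix.mul_sub, ← Matrix.diagonal_sub]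
    rfl
  rw [hdiff]
  have hnormV : ‖V * Matrix.diagonal (fun p : Fin d × Fin d =>
      ((lam p.1 : ℂ) * (lam p.2 : ℂ)) - g p.1 * g p.2) * Vᴴ‖
      = ‖Matrix.diagonal (fun p : Fin d × Fin d =>
      ((lam p.1 : ℂ) * (lam p.2 : ℂ)) - g p.1 * g p.2)‖ := by
    rw [Matrix.mul_assoc]
    rw [CStarRing.norm_coe_unitary_mul (⟨V, hVmem⟩ : unitary _)]
    rw [← Matrix.star_eq_conjTranspose]
    exact CStarRing.norm_mul_mem_unitary _ (Unitary.star_mem hVmem)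
  rw [hnormV]
  apply diag_opNorm_le _ (by positivity)
  rintro ⟨i, j⟩
  simp only [hg]
  by_cases h1 : ε/2 ≤ |lam i| <;> by_cases h2 : ε/2 ≤ |lam j| <;>
    simp only [h1, h2, if_true, if_false, sub_self, norm_zero, mul_zero, zero_mul, sub_zero]
  · positivity
  · rw [norm_mul, Complex.norm_real, Complex.norm_real]
    calc |lam i| * |lam j| ≤ 1 * (ε/2) := by
          apply mul_le_mul (hev i) (le_of_lt (lt_of_not_ge h2)) (abs_nonneg _) zero_le_one
      _ = ε/2 := one_mul _
  · rw [norm_mul, Complex.norm_real, Complex.norm_real]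
    calc |lam i| * |lam j| ≤ (ε/2) * 1 := by
          apply mul_le_mul (le_of_lt (lt_of_not_ge h1)) (hev j) (abs_nonneg _) (by positivity)
      _ = ε/2 := mul_one _
  · rw [norm_mul, Complex.norm_real, Complex.norm_real]
    calc |lam i| * |lam j| ≤ (ε/2) * 1 := by
          apply mul_le_mul (le_of_lt (lt_of_not_ge h1)) (hev j) (abs_nonneg _) (by positivity)
      _ = ε/2 := mul_one _
end
end

section
/- Let a₁, a₂, b₁, b₂ be positive integers. Let M be an operator on ℂ^{a₁} ⊗ ℂ^{a₂} ⊗ ℂ^{b₁} ⊗ ℂ^{b₂} with 0 ≤ M ≤ I which is separable across the (first two factors)|(last two factors) cut, i.e. M = Σ_t A_t ⊗ B_t with each A_t a positive semidefinite operator on ℂ^{a₁} ⊗ ℂ^{a₂} and each B_t a positive semidefinite operator on ℂ^{b₁} ⊗ ℂ^{b₂}. Let σ = Σ_i p_i ρ_i ⊗ τ_i be a separable state, where p_i ≥ 0 with Σ_i p_i = 1, each ρ_i is a density matrix on ℂ^{a₂}, and each τ_i is a density matrix on ℂ^{b₂}. Then there exists an operator M' on ℂ^{a₁} ⊗ ℂ^{b₁}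 with 0 ≤ M' ≤ I, of the separable form M' = Σ_s A'_s ⊗ B'_s with A'_s positive semidefinite on ℂ^{a₁} and B'_s positive semidefinite on ℂ^{b₁}, such that for every operator X on ℂ^{a₁} ⊗ ℂ^{b₁}: Tr[M · Θ(X ⊗ σ)] = Tr[M' X], where Θ is the canonical unitary reordering of tensor factors from (ℂ^{a₁} ⊗ ℂ^{b₁}) ⊗ (ℂ^{a₂} ⊗ ℂ^{b₂}) to ℂ^{a₁} ⊗ ℂ^{a₂} ⊗ ℂ^{b₁} ⊗ ℂ^{b₂} (conjugating the operator X ⊗ σ accordingly). -/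
open Matrix
open scoped Kronecker ComplexOrder

noncomputable section

namespace SepAbsorb

lemma sum4_rev {A B C D : Type*} [Fintype A] [Fintype B] [Fintype C] [Fintype D]
    (f : A → B → C → D → ℂ) :
    ∑ a, ∑ b, ∑ c, ∑ d, f a b c d = ∑ d, ∑ c, ∑ b, ∑ a, f a b c d := by
  calc ∑ a, ∑ b, ∑ c, ∑ d, f a b c d
      = ∑ a, ∑ b, ∑ d, ∑ c, f a b c d :=
        Finset.sum_congr rfl fun a _ => Finset.sum_congr rfl fun b _ => Finset.sum_comm
    _ = ∑ a, ∑ d, ∑ b, ∑ c, f a b c d := Finset.sum_congr rfl fun a _ => Finset.sum_comm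
    _ = ∑ d, ∑ a, ∑ b, ∑ c, f a b c d := Finset.sum_comm
    _ = ∑ d, ∑ a, ∑ c, ∑ b, f a b c d :=
        Finset.sum_congr rfl fun d _ => Finset.sum_congr rfl fun a _ => Finset.sum_comm
    _ = ∑ d, ∑ c, ∑ a, ∑ b, f a b c d := Finset.sum_congr rfl fun d _ => Finset.sum_comm
    _ = ∑ d, ∑ c, ∑ b, ∑ a, f a b c d :=
        Finset.sum_congr rfl fun d _ => Finset.sum_congr rfl fun c _ => Finset.sum_comm

lemma psd_smul_real {α : Type*} [Fintype α] {M : Matrix α α ℂ} (hM : M.PosSemidef)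
    {c : ℝ} (hc : 0 ≤ c) : ((c : ℂ) • M).PosSemidef := by
  constructor
  · unfold Matrix.IsHermitian
    rw [conjTranspose_smul, hM.1]
    norm_num
  · exact (hM.smul (Complex.zero_le_real.mpr hc)).2

open scoped MatrixOrder in
lemma posSemidef_iff_eq_transpose_mul_self {n : Type*} [Fintype n] [DecidableEq n]
    {A : Matrix n n ℂ} : A.PosSemidef ↔ ∃ B : Matrix n n ℂ, A = Bᴴ * B := by
  constructor
  · intro hA
    refine ⟨CFC.sqrt A, ?_⟩
    have h := CFC.sqrt_mul_sqrt_self A hA.nonneg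
    rw [(CFC.sqrt_nonneg A).posSemidef.1.eq]
    exact h.symm
  · rintro ⟨B, rfl⟩
    exact posSemidef_conjTranspose_mul_self B

lemma psd_kron {α β : Type*} [Fintype α] [Fintype β] [DecidableEq α] [DecidableEq β]
    {A : Matrix α α ℂ} {B : Matrix β β ℂ} (hA : A.PosSemidef) (hB : B.PosSemidef) :
    (A ⊗ₖ B).PosSemidef := by
  obtain ⟨E, hE⟩ := posSemidef_iff_eq_transpose_mul_self.mp hA
  obtain ⟨F, hF⟩ := posSemidef_iff_eq_transpose_mul_self.mp hB
  have h : A ⊗ₖ B = (E ⊗ₖ F)ᴴ * (E ⊗ₖ F) := by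
    have h2 : (E ⊗ₖ F)ᴴ = Eᴴ ⊗ₖ Fᴴ := by
      ext ⟨i, j⟩ ⟨k, l⟩
      simp [conjTranspose_apply, mul_comm]
    rw [h2, ← Matrix.mul_kronecker_mul, ← hE, ← hF]
  rw [h]
  exact posSemidef_conjTranspose_mul_self _

/-- The contraction `(N, ρ) ↦ Tr_γ[N (1 ⊗ ρ)]`. -/
def contract {α γ : Type*} [Fintype γ] (N : Matrix (α × γ) (α × γ) ℂ)
    (ρ : Matrix γ γ ℂ) : Matrix α α ℂ :=
  Matrix.of fun x u => ∑ r, ∑ s, N (x, r) (u, s) * ρ s r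

lemma psd_contract {α γ : Type*} [Fintype α] [Fintype γ] [DecidableEq α] [DecidableEq γ]
    {N : Matrix (α × γ) (α × γ) ℂ} {ρ : Matrix γ γ ℂ}
    (hN : N.PosSemidef) (hρ : ρ.PosSemidef) : (contract N ρ).PosSemidef := by
  obtain ⟨E, hE⟩ := posSemidef_iff_eq_transpose_mul_self.mp hN
  obtain ⟨C, hC⟩ := posSemidef_iff_eq_transpose_mul_self.mp hρ
  set F : Matrix ((α × γ) × γ) α ℂ :=
    Matrix.of fun w x => ∑ r, E w.1 (x, r) * star (C w.2 r) with hF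
  have h : contract N ρ = Fᴴ * F := by
    ext x u
    simp only [contract, hE, hC, Matrix.mul_apply, Matrix.conjTranspose_apply, hF,
      Matrix.of_apply, star_sum, star_mul', star_star, Finset.sum_mul, Finset.mul_sum]
    rw [Fintype.sum_prod_type, sum4_rev]
    refine Finset.sum_congr rfl fun j _ => Finset.sum_congr rfl fun k _ =>
      Finset.sum_congr rfl fun s _ => Finset.sum_congr rfl fun r _ => ?_
    ring
  rw [h]
  exact posSemidef_conjTranspose_mul_self _

end SepAbsorb

namespace SepAbsorb

set_option linter.unusedSectionVars false
set_option maxHeartbeats 1000000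

lemma sum4_swap23 {A B C D : Type*} [Fintype A] [Fintype B] [Fintype C] [Fintype D]
    (f : A → B → C → D → ℂ) :
    ∑ a, ∑ b, ∑ c, ∑ d, f a b c d = ∑ a, ∑ c, ∑ b, ∑ d, f a b c d :=
  Finset.sum_congr rfl fun _ _ => Finset.sum_comm

lemma sum4_perm {A B C D : Type*} [Fintype A] [Fintype B] [Fintype C] [Fintype D]
    (f : A → B → C → D → ℂ)
    (h3 : ∀ (g : A → C → D → ℂ), (∑ a, ∑ c, ∑ d, g a c d) = ∑ d, ∑ a, ∑ c, g a c d) :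
    ∑ a, ∑ b, ∑ c, ∑ d, f a b c d = ∑ b, ∑ d, ∑ a, ∑ c, f a b c d :=
  Finset.sum_comm.trans (Finset.sum_congr rfl fun b _ => h3 fun a c d => f a b c d)

lemma sum3_rot {A B C : Type*} [Fintype A] [Fintype B] [Fintype C]
    (f : A → B → C → ℂ) :
    ∑ a, ∑ b, ∑ c, f a b c = ∑ c, ∑ a, ∑ b, f a b c :=
  (Finset.sum_congr rfl fun _ _ => Finset.sum_comm).trans Finset.sum_comm

variable {α β γ δ : Type*} [Fintype α] [Fintype β] [Fintype γ] [Fintype δ]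
  [DecidableEq α] [DecidableEq β] [DecidableEq γ] [DecidableEq δ]

lemma contract_sub (P Q : Matrix (α × γ) (α × γ) ℂ) (ρ : Matrix γ γ ℂ) :
    contract (P - Q) ρ = contract P ρ - contract Q ρ := by
  ext x u
  simp [contract, sub_mul, Finset.sum_sub_distrib]

lemma contract_one {σ : Matrix γ γ ℂ} (hσtr : σ.trace = 1) :
    contract (1 : Matrix (α × γ) (α × γ) ℂ) σ = 1 := by
  ext x u
  simp only [contract, of_apply, Matrix.one_apply, Prod.mk.injEq, ite_and, Prod.ext_iff]
  by_cases hxu : x = u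
  · subst hxu
    simp only [if_pos rfl, ite_mul, one_mul, zero_mul, if_true]
    have h1 : ∀ r : γ, (∑ s, if r = s then σ s r else 0) = σ r r := fun r => by
      simp
    simp only [h1]
    simpa [Matrix.trace, Matrix.diag] using hσtr
  · simp [hxu]

lemma contract_sum_left {n : ℕ} (N : Fin n → Matrix (α × γ) (α × γ) ℂ) (ρ : Matrix γ γ ℂ) :
    contract (∑ t, N t) ρ = ∑ t, contract (N t) ρ := by
  ext x u
  simp only [contract, of_apply, Matrix.sum_apply, Finset.sum_mul]
  exact sum3_rot _

lemma contract_sum_right {n : ℕ} (N : Matrix (α × γ) (α × γ) ℂ) (c : Fin n → ℂ)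
    (ρ : Fin n → Matrix γ γ ℂ) :
    contract N (∑ i, c i • ρ i) = ∑ i, c i • contract N (ρ i) := by
  ext x u
  simp only [contract, of_apply, Matrix.sum_apply, Matrix.smul_apply, smul_eq_mul,
    Finset.mul_sum, Finset.sum_mul]
  refine (sum3_rot _).trans ?_
  refine Finset.sum_congr rfl fun i _ => ?_
  exact Finset.sum_congr rfl fun r _ => Finset.sum_congr rfl fun s _ => by ring

/-- The regrouping equivalence of tensor factors. -/
def regroup {α₁ β₁ α₂ β₂ : Type*} :
    ((α₁ × β₁) × (α₂ × β₂)) ≃ ((α₁ × α₂) × (β₁ × β₂)) where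
  toFun p := ((p.1.1, p.2.1), (p.1.2, p.2.2))
  invFun p := ((p.1.1, p.2.1), (p.1.2, p.2.2))
  left_inv _ := rfl
  right_inv _ := rfl

lemma contract_kron_block
    (A : Matrix (α × γ) (α × γ) ℂ) (B : Matrix (β × δ) (β × δ) ℂ)
    (ρ : Matrix γ γ ℂ) (τ : Matrix δ δ ℂ) :
    contract ((A ⊗ₖ B).submatrix (regroup (α₁ := α) (β₁ := β)) regroup) (ρ ⊗ₖ τ)
      = contract A ρ ⊗ₖ contract B τ := by
  ext x u
  simp only [contract, of_apply, kroneckerMap_apply, submatrix_apply, regroup,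
    Equiv.coe_fn_mk, Finset.sum_mul, Finset.mul_sum, Fintype.sum_prod_type]
  refine Eq.trans (sum4_perm _ fun g => sum3_rot g) ?_
  refine Finset.sum_congr rfl fun r2 _ =>
    Finset.sum_congr rfl fun s2 _ => Finset.sum_congr rfl fun r1 _ =>
    Finset.sum_congr rfl fun s1 _ => by ring

end SepAbsorb

namespace SepAbsorb

lemma sum_prod_prod {P Q R S : Type*} [Fintype P] [Fintype Q] [Fintype R] [Fintype S]
    (F : P → Q → R → S → ℂ) :
    ∑ w : P × R, ∑ w' : Q × S, F w.1 w'.1 w.2 w'.2 = ∑ p, ∑ q, ∑ r, ∑ s, F p q r s := by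
  simp only [Fintype.sum_prod_type]
  exact sum4_swap23 _

lemma trace_mul_expand {ι : Type*} [Fintype ι] (P Q : Matrix ι ι ℂ) :
    (P * Q).trace = ∑ i, ∑ j, P i j * Q j i := by
  simp [Matrix.trace, Matrix.diag, Matrix.mul_apply]

end SepAbsorb


/-- An operator on a bipartite space is separable (across the `α|β` cut) if it is a
finite sum `Σ_t A_t ⊗ B_t` of Kronecker products of positive semidefinite operators. -/
def IsSeparableOp {α β : Type*} [Fintype α] [Fintype β] [DecidableEq α] [DecidableEq β]
    (M : Matrix (α × β) (α × β) ℂ) : Prop :=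
  ∃ (n : ℕ) (A : Fin n → Matrix α α ℂ) (B : Fin n → Matrix β β ℂ),
    (∀ t, (A t).PosSemidef) ∧ (∀ t, (B t).PosSemidef) ∧ M = ∑ t, A t ⊗ₖ B t

/-- A separable state: a convex combination `Σ_i p_i ρ_i ⊗ τ_i` of Kronecker products of
density matrices. -/
def IsSeparableState {α β : Type*} [Fintype α] [Fintype β] [DecidableEq α] [DecidableEq β]
    (σ : Matrix (α × β) (α × β) ℂ) : Prop :=
  ∃ (n : ℕ) (p : Fin n → ℝ) (ρ : Fin n → Matrix α α ℂ) (τ : Fin n → Matrix β β ℂ),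
    (∀ i, 0 ≤ p i) ∧ (∑ i, p i = 1) ∧
    (∀ i, (ρ i).PosSemidef ∧ (ρ i).trace = 1) ∧
    (∀ i, (τ i).PosSemidef ∧ (τ i).trace = 1) ∧
    σ = ∑ i, (p i : ℂ) • (ρ i ⊗ₖ τ i)

/-- `Θ(X ⊗ σ)`: the operator `X ⊗ σ` on `(ℂ^{a₁} ⊗ ℂ^{b₁}) ⊗ (ℂ^{a₂} ⊗ ℂ^{b₂})`,
conjugated by the canonical unitary reordering of tensor factors into
`ℂ^{a₁} ⊗ ℂ^{a₂} ⊗ ℂ^{b₁} ⊗ ℂ^{b₂}`. -/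
def reorderTensor {α₁ β₁ α₂ β₂ : Type*}
    (X : Matrix (α₁ × β₁) (α₁ × β₁) ℂ) (σ : Matrix (α₂ × β₂) (α₂ × β₂) ℂ) :
    Matrix ((α₁ × α₂) × (β₁ × β₂)) ((α₁ × α₂) × (β₁ × β₂)) ℂ :=
  Matrix.of fun p q =>
    X (p.1.1, p.2.1) (q.1.1, q.2.1) * σ (p.1.2, p.2.2) (q.1.2, q.2.2)

/-- Let `M` be a separable operator with `0 ≤ M ≤ I` on
`ℂ^{a₁} ⊗ ℂ^{a₂} ⊗ ℂ^{b₁} ⊗ ℂ^{b₂}` across the `(a₁,a₂)|(b₁,b₂)` cut, and let `σ` be a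
separable state on `ℂ^{a₂} ⊗ ℂ^{b₂}`. Then there exists a separable operator `M'` with
`0 ≤ M' ≤ I` on `ℂ^{a₁} ⊗ ℂ^{b₁}` such that `Tr[M·Θ(X ⊗ σ)] = Tr[M'·X]` for every
operator `X` on `ℂ^{a₁} ⊗ ℂ^{b₁}`. -/
theorem separable_absorb_resource_state (a₁ a₂ b₁ b₂ : ℕ)
    (ha₁ : 0 < a₁) (ha₂ : 0 < a₂) (hb₁ : 0 < b₁) (hb₂ : 0 < b₂)
    (M : Matrix ((Fin a₁ × Fin a₂) × (Fin b₁ × Fin b₂))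
      ((Fin a₁ × Fin a₂) × (Fin b₁ × Fin b₂)) ℂ)
    (hM0 : M.PosSemidef) (hM1 : (1 - M).PosSemidef) (hMsep : IsSeparableOp M)
    (σ : Matrix (Fin a₂ × Fin b₂) (Fin a₂ × Fin b₂) ℂ) (hσ : IsSeparableState σ) :
    ∃ M' : Matrix (Fin a₁ × Fin b₁) (Fin a₁ × Fin b₁) ℂ,
      M'.PosSemidef ∧ (1 - M').PosSemidef ∧ IsSeparableOp M' ∧
      ∀ X : Matrix (Fin a₁ × Fin b₁) (Fin a₁ × Fin b₁) ℂ,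
        Matrix.trace (M * reorderTensor X σ) = Matrix.trace (M' * X) := by

  classical
  obtain ⟨n, A, B, hA, hB, hMeq⟩ := hMsep
  obtain ⟨m, p, ρ, τ, hp0, hp1, hρτ, hττ, hσeq⟩ := hσ
  set e : ((Fin a₁ × Fin b₁) × (Fin a₂ × Fin b₂)) ≃ ((Fin a₁ × Fin a₂) × (Fin b₁ × Fin b₂)) :=
    SepAbsorb.regroup with he
  have hσpsd : σ.PosSemidef := by
    rw [hσeq]
    refine Finset.sum_induction _ _ (fun a b ha hb => ha.add hb) Matrix.PosSemidef.zero ?_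
    intro i _
    exact SepAbsorb.psd_smul_real (SepAbsorb.psd_kron (hρτ i).1 (hττ i).1) (hp0 i)
  have hσtr : σ.trace = 1 := by
    rw [hσeq, trace_sum]
    simp only [trace_smul, trace_kronecker, (hρτ _).2, (hττ _).2, mul_one, smul_eq_mul]
    exact_mod_cast hp1
  have hkey : SepAbsorb.contract (M.submatrix e e) σ =
      ∑ t, ∑ i, (p i : ℂ) •
        (SepAbsorb.contract (A t) (ρ i) ⊗ₖ SepAbsorb.contract (B t) (τ i)) := by
    rw [hMeq, hσeq]
    have hsub : (∑ t, A t ⊗ₖ B t).submatrix (e : _ → _) e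
        = ∑ t, (A t ⊗ₖ B t).submatrix (e : _ → _) e := by
      ext pq rs
      simp [Matrix.sum_apply]
    rw [hsub, SepAbsorb.contract_sum_left]
    refine Finset.sum_congr rfl fun t _ => ?_
    rw [SepAbsorb.contract_sum_right]
    exact Finset.sum_congr rfl fun i _ => by
      rw [he, SepAbsorb.contract_kron_block]
  refine ⟨SepAbsorb.contract (M.submatrix e e) σ, ?_, ?_, ?_, ?_⟩
  · exact SepAbsorb.psd_contract (hM0.submatrix e) hσpsd
  · have h1 : (1 : Matrix (Fin a₁ × Fin b₁) (Fin a₁ × Fin b₁) ℂ)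
        - SepAbsorb.contract (M.submatrix e e) σ =
        SepAbsorb.contract ((1 - M).submatrix e e) σ := by
      have h2 : (1 - M).submatrix (e : _ → _) e = 1 - M.submatrix (e : _ → _) e := by
        ext pq rs
        simp [Matrix.submatrix_apply, Matrix.sub_apply, Matrix.one_apply, e.injective.eq_iff]
      rw [h2, SepAbsorb.contract_sub, SepAbsorb.contract_one hσtr]
    rw [h1]
    exact SepAbsorb.psd_contract (hM1.submatrix e) hσpsd
  · refine ⟨n * m,
      fun w => (p (finProdFinEquiv.symm w).2 : ℂ) •
        SepAbsorb.contract (A (finProdFinEquiv.symm w).1) (ρ (finProdFinEquiv.symm w).2),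
      fun w => SepAbsorb.contract (B (finProdFinEquiv.symm w).1) (τ (finProdFinEquiv.symm w).2),
      fun w => SepAbsorb.psd_smul_real
        (SepAbsorb.psd_contract (hA _) (hρτ _).1) (hp0 _),
      fun w => SepAbsorb.psd_contract (hB _) (hττ _).1, ?_⟩
    rw [hkey]
    have hsum := Equiv.sum_comp
      (finProdFinEquiv.symm : Fin (n * m) ≃ Fin n × Fin m)
      (fun q : Fin n × Fin m => (p q.2 : ℂ) •
        (SepAbsorb.contract (A q.1) (ρ q.2) ⊗ₖ SepAbsorb.contract (B q.1) (τ q.2)))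
    rw [Fintype.sum_prod_type] at hsum
    rw [← hsum]
    exact Finset.sum_congr rfl fun w _ => by rw [Matrix.smul_kronecker]
  · intro X
    rw [SepAbsorb.trace_mul_expand, SepAbsorb.trace_mul_expand]
    simp only [SepAbsorb.contract, Matrix.of_apply, Matrix.submatrix_apply, Finset.sum_mul,
      reorderTensor]
    refine Eq.trans ((Equiv.sum_comp e _).symm) ?_
    refine Eq.trans (Finset.sum_congr rfl fun w _ => (Equiv.sum_comp e _).symm) ?_
    refine Eq.trans (SepAbsorb.sum_prod_prod
      (fun p q r s => M (e (p, r)) (e (q, s)) * (X q p * σ s r))) ?_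
    refine Finset.sum_congr rfl fun pp _ => Finset.sum_congr rfl fun qq _ =>
      Finset.sum_congr rfl fun r _ => Finset.sum_congr rfl fun sInd _ => by ring
end
end

section
/- Let d, k, q_A, q_B be positive integers, let μ be the uniform (Haar) probability measure on the unit sphere of ℂ^d, and let t ≥ 0 be such that for every operator N on (ℂ^d)^{⊗k} ⊗ (ℂ^d)^{⊗k} with 0 ≤ N ≤ I of the separable form N = Σ_s A_s ⊗ B_s (A_s, B_s positive semidefinite on (ℂ^d)^{⊗k}), one has |∫∫ Tr[N · ((|φ⟩⟨φ|)^{⊗k} ⊗ ((|φ⟩⟨φ|)^{⊗k} − (|ψ⟩⟨ψ|)^{⊗k}))] dμ(φ) dμ(ψ)| ≤ t. Let σ be a density matrix on ℂ^{q_A} ⊗ ℂ^{q_B} admitting a decomposition σ = (1+s)σ⁺ − s σ⁻ with s ≥ 0 and σ⁺, σ⁻ separable states. Let M be an operator with 0 ≤ M ≤ I on ((ℂ^d)^{⊗k} ⊗ ℂ^{q_A}) ⊗ ((ℂ^d)^{⊗k} ⊗ ℂ^{q_B}) which is separable across this bipartite cut, i.e. M = Σ_t A_t ⊗ B_t with A_t,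 B_t positive semidefinite on the respective factors. Then |∫∫ Tr[M · Θ((|φ⟩⟨φ|)^{⊗k} ⊗ ((|φ⟩⟨φ|)^{⊗k} − (|ψ⟩⟨ψ|)^{⊗k}) ⊗ σ)] dμ(φ) dμ(ψ)| ≤ (1+2s)·t, where Θ is the canonical unitary reordering of tensor factors placing Alice's k copies together with the ℂ^{q_A} factor and Bob's k copies together with the ℂ^{q_B} factor. -/
open Matrix MeasureTheory
open scoped Kronecker ComplexOrder

noncomputable section

/-- Equip `ℂ^d` with its Borel σ-algebra. -/
instance {d : ℕ} : MeasurableSpace (EuclideanSpace ℂ (Fin d)) := borel _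

instance {d : ℕ} : BorelSpace (EuclideanSpace ℂ (Fin d)) := ⟨rfl⟩

/-- `(|φ⟩⟨φ|)^{⊗k}`, the `k`-fold tensor power of the rank-one projection `|φ⟩⟨φ|`,
as a matrix indexed by `Fin k → Fin d`. -/
def powKet {d : ℕ} (k : ℕ) (φ : EuclideanSpace ℂ (Fin d)) :
    Matrix (Fin k → Fin d) (Fin k → Fin d) ℂ :=
  Matrix.of fun i j => ∏ l, φ (i l) * star (φ (j l))

namespace Aux

variable {α₁ β₁ α₂ β₂ γ δ : Type*} [Fintype α₁] [Fintype β₁] [Fintype α₂] [Fintype β₂]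
  [Fintype γ] [Fintype δ]

/-- `N_τ`, the conditional operator. -/
def condOp (M : Matrix ((α₁ × α₂) × (β₁ × β₂)) ((α₁ × α₂) × (β₁ × β₂)) ℂ)
    (τ : Matrix (α₂ × β₂) (α₂ × β₂) ℂ) : Matrix (α₁ × β₁) (α₁ × β₁) ℂ :=
  Matrix.of fun p q => ∑ r : α₂ × β₂, ∑ r' : α₂ × β₂,
    M ((p.1, r.1), (p.2, r.2)) ((q.1, r'.1), (q.2, r'.2)) * τ r' r

lemma reorderTensor_eq_submatrix (X : Matrix (α₁ × β₁) (α₁ × β₁) ℂ)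
    (τ : Matrix (α₂ × β₂) (α₂ × β₂) ℂ) :
    reorderTensor X τ = (X ⊗ₖ τ).submatrix (Equiv.prodProdProdComm α₁ α₂ β₁ β₂)
      (Equiv.prodProdProdComm α₁ α₂ β₁ β₂) := rfl

lemma trace_condOp (M : Matrix ((α₁ × α₂) × (β₁ × β₂)) ((α₁ × α₂) × (β₁ × β₂)) ℂ)
    (τ : Matrix (α₂ × β₂) (α₂ × β₂) ℂ) (X : Matrix (α₁ × β₁) (α₁ × β₁) ℂ) :
    (M * reorderTensor X τ).trace = (condOp M τ * X).trace := by
  have h1 : (M * reorderTensor X τ).trace =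
      ∑ z : (((α₁ × α₂) × (β₁ × β₂)) × ((α₁ × α₂) × (β₁ × β₂))),
        M z.1 z.2 * (X (z.2.1.1, z.2.2.1) (z.1.1.1, z.1.2.1) *
          τ (z.2.1.2, z.2.2.2) (z.1.1.2, z.1.2.2)) := by
    simp only [Matrix.trace, Matrix.diag, Matrix.mul_apply, reorderTensor, Matrix.of_apply,
      Fintype.sum_prod_type]
  have h2 : (condOp M τ * X).trace =
      ∑ w : (((α₁ × β₁) × (α₁ × β₁)) × ((α₂ × β₂) × (α₂ × β₂))),
        M ((w.1.1.1, w.2.1.1), (w.1.1.2, w.2.1.2)) ((w.1.2.1, w.2.2.1), (w.1.2.2, w.2.2.2)) *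
          τ w.2.2 w.2.1 * X w.1.2 w.1.1 := by
    simp only [Matrix.trace, Matrix.diag, Matrix.mul_apply, condOp, Matrix.of_apply,
      Finset.sum_mul, Fintype.sum_prod_type]
  rw [h1, h2]
  refine Fintype.sum_equiv ⟨fun z => (((z.1.1.1, z.1.2.1), (z.2.1.1, z.2.2.1)),
      ((z.1.1.2, z.1.2.2), (z.2.1.2, z.2.2.2))),
    fun w => (((w.1.1.1, w.2.1.1), (w.1.1.2, w.2.1.2)),
      ((w.1.2.1, w.2.2.1), (w.1.2.2, w.2.2.2))), fun z => rfl, fun w => rfl⟩ _ _ fun z => by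
    simp only [Equiv.coe_fn_mk]
    ring

end Aux

namespace Aux2
open Aux
variable {α₁ β₁ α₂ β₂ γ δ : Type*} [Fintype α₁] [Fintype β₁] [Fintype α₂] [Fintype β₂]
  [Fintype γ] [Fintype δ]

lemma sum_comm4 {A B C D M : Type*} [Fintype A] [Fintype B] [Fintype C] [Fintype D]
    [AddCommMonoid M] (f : A → B → C → D → M) :
    ∑ a, ∑ b, ∑ c, ∑ d, f a b c d = ∑ b, ∑ d, ∑ a, ∑ c, f a b c d := by
  rw [Finset.sum_comm]
  refine Finset.sum_congr rfl fun b _ => ?_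
  calc ∑ a, ∑ c, ∑ d, f a b c d
      = ∑ a, ∑ d, ∑ c, f a b c d := Finset.sum_congr rfl fun a _ => Finset.sum_comm
    _ = ∑ d, ∑ a, ∑ c, f a b c d := Finset.sum_comm

/-- partial trace of `A` against the state `ρ` on the second factor. -/
def pt (A : Matrix (γ × δ) (γ × δ) ℂ) (ρ : Matrix δ δ ℂ) : Matrix γ γ ℂ :=
  Matrix.of fun i j => ∑ a : δ, ∑ a' : δ, A (i, a) (j, a') * ρ a' a

lemma condOp_kron (A : Matrix (α₁ × α₂) (α₁ × α₂) ℂ) (B : Matrix (β₁ × β₂) (β₁ × β₂) ℂ)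
    (ρ : Matrix α₂ α₂ ℂ) (υ : Matrix β₂ β₂ ℂ) :
    condOp (A ⊗ₖ B) (ρ ⊗ₖ υ) = pt A ρ ⊗ₖ pt B υ := by
  ext p q
  simp only [condOp, pt, Matrix.of_apply, Matrix.kroneckerMap_apply, Fintype.sum_prod_type,
    Finset.sum_mul, Finset.mul_sum]
  rw [sum_comm4]
  exact Finset.sum_congr rfl fun b _ => Finset.sum_congr rfl fun b' _ =>
    Finset.sum_congr rfl fun a _ => Finset.sum_congr rfl fun a' _ => by ring

lemma condOp_smul (M : Matrix ((α₁ × α₂) × (β₁ × β₂)) ((α₁ × α₂) × (β₁ × β₂)) ℂ)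
    (c : ℂ) (τ : Matrix (α₂ × β₂) (α₂ × β₂) ℂ) :
    condOp M (c • τ) = c • condOp M τ := by
  ext p q
  simp only [condOp, Matrix.of_apply, Matrix.smul_apply, smul_eq_mul, Finset.mul_sum]
  refine Finset.sum_congr rfl fun r _ => Finset.sum_congr rfl fun r' _ => by ring

lemma condOp_sub (M : Matrix ((α₁ × α₂) × (β₁ × β₂)) ((α₁ × α₂) × (β₁ × β₂)) ℂ)
    (τ₁ τ₂ : Matrix (α₂ × β₂) (α₂ × β₂) ℂ) :
    condOp M (τ₁ - τ₂) = condOp M τ₁ - condOp M τ₂ := by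
  ext p q
  simp only [condOp, Matrix.of_apply, Matrix.sub_apply, mul_sub, Finset.sum_sub_distrib]

lemma condOp_sum_left {n : ℕ} (M : Fin n → Matrix ((α₁ × α₂) × (β₁ × β₂)) ((α₁ × α₂) × (β₁ × β₂)) ℂ)
    (τ : Matrix (α₂ × β₂) (α₂ × β₂) ℂ) :
    condOp (∑ t, M t) τ = ∑ t, condOp (M t) τ := by
  ext p q
  simp only [condOp, Matrix.of_apply, Matrix.sum_apply, Finset.sum_mul]
  exact (Finset.sum_comm.trans (Finset.sum_congr rfl fun r _ => Finset.sum_comm)).symm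

lemma condOp_sum_right {n : ℕ} (M : Matrix ((α₁ × α₂) × (β₁ × β₂)) ((α₁ × α₂) × (β₁ × β₂)) ℂ)
    (τ : Fin n → Matrix (α₂ × β₂) (α₂ × β₂) ℂ) :
    condOp M (∑ i, τ i) = ∑ i, condOp M (τ i) := by
  ext p q
  simp only [condOp, Matrix.of_apply, Matrix.sum_apply, Finset.mul_sum]
  exact (Finset.sum_comm.trans (Finset.sum_congr rfl fun r _ => Finset.sum_comm)).symm

end Aux2

namespace Aux3
open Aux Aux2
variable {γ δ : Type*} [Fintype γ] [Fintype δ] [DecidableEq γ] [DecidableEq δ]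

lemma kron_conjTranspose (A : Matrix γ γ ℂ) (B : Matrix δ δ ℂ) :
    (A ⊗ₖ B)ᴴ = Aᴴ ⊗ₖ Bᴴ := by
  ext p q
  simp [Matrix.conjTranspose_apply, Matrix.kroneckerMap_apply, star_mul']

lemma kron_posSemidef {A : Matrix γ γ ℂ} {B : Matrix δ δ ℂ}
    (hA : A.PosSemidef) (hB : B.PosSemidef) : (A ⊗ₖ B).PosSemidef := by
  exact hA.kronecker hB

lemma trace_nonneg' {A : Matrix γ γ ℂ} (hA : A.PosSemidef) : 0 ≤ A.trace := by
  exact hA.trace_nonneg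

lemma trace_mul_nonneg {A B : Matrix γ γ ℂ} (hA : A.PosSemidef) (hB : B.PosSemidef) :
    0 ≤ (A * B).trace := by
  obtain ⟨m, v, rfl⟩ := Matrix.posSemidef_iff_eq_sum_vecMulVec.mp hA
  rw [Finset.sum_mul, Matrix.trace_sum]
  refine Finset.sum_nonneg fun i _ => ?_
  rw [Matrix.trace_mul_comm]
  have h : (B * Matrix.vecMulVec (v i) (star (v i))).trace = star (v i) ⬝ᵥ B *ᵥ v i := by
    simp only [Matrix.trace, Matrix.diag, Matrix.mul_apply, Matrix.vecMulVec_apply,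
      Pi.star_apply, dotProduct, Matrix.mulVec, Finset.mul_sum, Finset.sum_mul]
    exact Finset.sum_congr rfl fun u _ => Finset.sum_congr rfl fun w _ => by ring
  rw [h]
  exact hB.dotProduct_mulVec_nonneg _

lemma posSemidef_real_smul {A : Matrix γ γ ℂ} {c : ℝ} (hc : 0 ≤ c) (hA : A.PosSemidef) :
    ((c : ℂ) • A).PosSemidef := by
  refine Matrix.PosSemidef.of_dotProduct_mulVec_nonneg ?_ fun x => ?_
  · show ((c : ℂ) • A)ᴴ = (c : ℂ) • A
    rw [Matrix.conjTranspose_smul, Complex.star_def, Complex.conj_ofReal, hA.1.eq]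
  · rw [Matrix.smul_mulVec, dotProduct_smul, smul_eq_mul]
    exact mul_nonneg (by exact_mod_cast hc) (hA.dotProduct_mulVec_nonneg x)

lemma vecMulVec_posSemidef (x : γ → ℂ) : (Matrix.vecMulVec x (star x)).PosSemidef := by
  have : Matrix.vecMulVec x (star x) = (Matrix.replicateRow Unit (star x))ᴴ * Matrix.replicateRow Unit (star x) := by
    ext i j
    simp [Matrix.vecMulVec_apply, Matrix.mul_apply, Matrix.replicateRow_apply,
      Matrix.conjTranspose_apply, mul_comm]
  rw [this]
  exact Matrix.posSemidef_conjTranspose_mul_self _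

end Aux3

namespace Aux4
open Aux Aux2 Aux3
variable {α₁ β₁ α₂ β₂ γ δ : Type*} [Fintype α₁] [Fintype β₁] [Fintype α₂] [Fintype β₂]
  [Fintype γ] [Fintype δ] [DecidableEq α₁] [DecidableEq β₁] [DecidableEq α₂] [DecidableEq β₂]
  [DecidableEq γ] [DecidableEq δ]

lemma sum_comm_mid {A B C D M : Type*} [Fintype A] [Fintype B] [Fintype C] [Fintype D]
    [AddCommMonoid M] (f : A → B → C → D → M) :
    ∑ a, ∑ b, ∑ c, ∑ d, f a b c d = ∑ a, ∑ c, ∑ b, ∑ d, f a b c d :=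
  Finset.sum_congr rfl fun _ _ => Finset.sum_comm

lemma pt_isHermitian {A : Matrix (γ × δ) (γ × δ) ℂ} {ρ : Matrix δ δ ℂ}
    (hA : A.IsHermitian) (hρ : ρ.IsHermitian) : (pt A ρ).IsHermitian := by
  ext i j
  simp only [Matrix.conjTranspose_apply, pt, Matrix.of_apply, star_sum, star_mul']
  rw [Finset.sum_comm]
  refine Finset.sum_congr rfl fun a _ => Finset.sum_congr rfl fun a' _ => ?_
  rw [hA.apply, hρ.apply, mul_comm]

lemma dot_pt {A : Matrix (γ × δ) (γ × δ) ℂ} {ρ : Matrix δ δ ℂ} (x : γ → ℂ) :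
    star x ⬝ᵥ (pt A ρ) *ᵥ x = (A * (Matrix.vecMulVec x (star x) ⊗ₖ ρ)).trace := by
  have h1 : star x ⬝ᵥ (pt A ρ) *ᵥ x =
      ∑ i, ∑ j, ∑ a, ∑ a', star (x i) * (A (i, a) (j, a') * ρ a' a * x j) := by
    simp only [dotProduct, Matrix.mulVec, pt, Matrix.of_apply, Pi.star_apply,
      Finset.sum_mul, Finset.mul_sum]
  have h2 : (A * (Matrix.vecMulVec x (star x) ⊗ₖ ρ)).trace =
      ∑ i, ∑ a, ∑ j, ∑ a', A (i, a) (j, a') * (x j * star (x i) * ρ a' a) := by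
    simp only [Matrix.trace, Matrix.diag, Matrix.mul_apply, Matrix.kroneckerMap_apply,
      Matrix.vecMulVec_apply, Pi.star_apply, Fintype.sum_prod_type]
  rw [h1, h2, sum_comm_mid]
  exact Finset.sum_congr rfl fun i _ => Finset.sum_congr rfl fun a _ =>
    Finset.sum_congr rfl fun j _ => Finset.sum_congr rfl fun a' _ => by ring

lemma pt_posSemidef {A : Matrix (γ × δ) (γ × δ) ℂ} {ρ : Matrix δ δ ℂ}
    (hA : A.PosSemidef) (hρ : ρ.PosSemidef) : (pt A ρ).PosSemidef := by
  refine Matrix.PosSemidef.of_dotProduct_mulVec_nonneg (pt_isHermitian hA.1 hρ.1) fun x => ?_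
  rw [dot_pt]
  exact trace_mul_nonneg hA (kron_posSemidef (vecMulVec_posSemidef x) hρ)

lemma condOp_isHermitian {M : Matrix ((α₁ × α₂) × (β₁ × β₂)) ((α₁ × α₂) × (β₁ × β₂)) ℂ}
    {τ : Matrix (α₂ × β₂) (α₂ × β₂) ℂ} (hM : M.IsHermitian) (hτ : τ.IsHermitian) :
    (condOp M τ).IsHermitian := by
  ext p q
  simp only [Matrix.conjTranspose_apply, condOp, Matrix.of_apply, star_sum, star_mul']
  rw [Finset.sum_comm]
  refine Finset.sum_congr rfl fun r _ => Finset.sum_congr rfl fun r' _ => ?_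
  rw [hM.apply, hτ.apply, mul_comm]

lemma trace_mul_vecMulVec (N : Matrix (α₁ × β₁) (α₁ × β₁) ℂ) (x : (α₁ × β₁) → ℂ) :
    (N * Matrix.vecMulVec x (star x)).trace = star x ⬝ᵥ N *ᵥ x := by
  simp only [Matrix.trace, Matrix.diag, Matrix.mul_apply, Matrix.vecMulVec_apply,
    Pi.star_apply, dotProduct, Matrix.mulVec, Finset.mul_sum]
  exact Finset.sum_congr rfl fun u _ => Finset.sum_congr rfl fun v _ => by ring

lemma dot_condOp (M : Matrix ((α₁ × α₂) × (β₁ × β₂)) ((α₁ × α₂) × (β₁ × β₂)) ℂ)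
    (τ : Matrix (α₂ × β₂) (α₂ × β₂) ℂ) (x : (α₁ × β₁) → ℂ) :
    star x ⬝ᵥ (condOp M τ) *ᵥ x =
      (M * reorderTensor (Matrix.vecMulVec x (star x)) τ).trace := by
  rw [trace_condOp, trace_mul_vecMulVec]

lemma reorderTensor_posSemidef {X : Matrix (α₁ × β₁) (α₁ × β₁) ℂ}
    {τ : Matrix (α₂ × β₂) (α₂ × β₂) ℂ} (hX : X.PosSemidef) (hτ : τ.PosSemidef) :
    (reorderTensor X τ).PosSemidef := by
  rw [reorderTensor_eq_submatrix]
  exact (kron_posSemidef hX hτ).submatrix _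

lemma trace_reorderTensor (X : Matrix (α₁ × β₁) (α₁ × β₁) ℂ)
    (τ : Matrix (α₂ × β₂) (α₂ × β₂) ℂ) :
    (reorderTensor X τ).trace = X.trace * τ.trace := by
  rw [reorderTensor_eq_submatrix, ← Matrix.trace_kronecker]
  exact Fintype.sum_equiv (Equiv.prodProdProdComm α₁ α₂ β₁ β₂) _ _ fun p => rfl

lemma condOp_posSemidef {M : Matrix ((α₁ × α₂) × (β₁ × β₂)) ((α₁ × α₂) × (β₁ × β₂)) ℂ}
    {τ : Matrix (α₂ × β₂) (α₂ × β₂) ℂ} (hM : M.PosSemidef) (hτ : τ.PosSemidef) :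
    (condOp M τ).PosSemidef := by
  refine Matrix.PosSemidef.of_dotProduct_mulVec_nonneg (condOp_isHermitian hM.1 hτ.1) fun x => ?_
  rw [dot_condOp]
  exact trace_mul_nonneg hM (reorderTensor_posSemidef (vecMulVec_posSemidef x) hτ)

lemma one_sub_condOp_posSemidef {M : Matrix ((α₁ × α₂) × (β₁ × β₂)) ((α₁ × α₂) × (β₁ × β₂)) ℂ}
    {τ : Matrix (α₂ × β₂) (α₂ × β₂) ℂ} (hM : (1 - M).PosSemidef) (hMh : M.IsHermitian)
    (hτ : τ.PosSemidef) (hτtr : τ.trace = 1) :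
    (1 - condOp M τ).PosSemidef := by
  refine Matrix.PosSemidef.of_dotProduct_mulVec_nonneg
    (Matrix.isHermitian_one.sub (condOp_isHermitian hMh hτ.1)) fun x => ?_
  have key : star x ⬝ᵥ (1 - condOp M τ) *ᵥ x =
      ((1 - M) * reorderTensor (Matrix.vecMulVec x (star x)) τ).trace := by
    rw [Matrix.sub_mul, Matrix.one_mul, Matrix.trace_sub, trace_reorderTensor, hτtr, mul_one,
      Matrix.sub_mulVec, dotProduct_sub, Matrix.one_mulVec, dot_condOp]
    congr 1
    simp only [Matrix.trace, Matrix.diag, Matrix.vecMulVec_apply, Pi.star_apply,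
      dotProduct, Pi.star_apply]
    exact Finset.sum_congr rfl fun u _ => mul_comm _ _
  rw [key]
  exact trace_mul_nonneg hM (reorderTensor_posSemidef (vecMulVec_posSemidef x) hτ)

end Aux4

namespace Aux5
open Aux Aux2 Aux3 Aux4

variable {d k : ℕ}

local notation "E" => EuclideanSpace ℂ (Fin d)
local notation "F" => (Fin k → Fin d)

lemma apply_abs_le (φ : E) (a : Fin d) : ‖φ a‖ ≤ ‖φ‖ := by
  have h : ‖φ a‖ = Real.sqrt (‖φ a‖ ^ 2) := (Real.sqrt_sq (norm_nonneg _)).symm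
  rw [h, EuclideanSpace.norm_eq]
  exact Real.sqrt_le_sqrt (Finset.single_le_sum (f := fun i => ‖φ i‖ ^ 2)
    (fun i _ => sq_nonneg _) (Finset.mem_univ a))

lemma abs_powKet_le (φ : E) (i j : F) : ‖powKet k φ i j‖ ≤ (‖φ‖ ^ 2) ^ k := by
  have : ‖powKet k φ i j‖ = ∏ l, ‖φ (i l)‖ * ‖φ (j l)‖ := by
    simp [powKet, norm_prod, norm_mul, norm_star]
  rw [this, ← Fin.prod_const k (‖φ‖ ^ 2)]
  refine Finset.prod_le_prod (fun l _ => mul_nonneg (norm_nonneg _) (norm_nonneg _))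
    fun l _ => ?_
  rw [sq]
  exact mul_le_mul (apply_abs_le φ _) (apply_abs_le φ _) (norm_nonneg _) (norm_nonneg _)

lemma continuous_powKet_single (i j : F) :
    Continuous fun φ : E => powKet k φ i j := by
  show Continuous fun φ : E => ∏ l, φ (i l) * star (φ (j l))
  refine continuous_finset_prod _ fun l _ => Continuous.mul ?_ (Continuous.star ?_)
  · exact (EuclideanSpace.proj (i l)).continuous
  · exact (EuclideanSpace.proj (j l)).continuous

lemma continuous_powKet_entry (i j : F) :
    Continuous fun p : E × E => powKet k p.1 i j := by
  show Continuous fun p : E × E => ∏ l, p.1 (i l) * star (p.1 (j l))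
  refine continuous_finset_prod _ fun l _ => Continuous.mul ?_ (Continuous.star ?_)
  · exact (EuclideanSpace.proj (i l)).continuous.comp continuous_fst
  · exact (EuclideanSpace.proj (j l)).continuous.comp continuous_fst

lemma continuous_powKet_entry' (i j : F) :
    Continuous fun p : E × E => powKet k p.2 i j := by
  show Continuous fun p : E × E => ∏ l, p.2 (i l) * star (p.2 (j l))
  refine continuous_finset_prod _ fun l _ => Continuous.mul ?_ (Continuous.star ?_)
  · exact (EuclideanSpace.proj (i l)).continuous.comp continuous_snd
  · exact (EuclideanSpace.proj (j l)).continuous.comp continuous_snd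

/-- the basic integrand -/
def g (N : Matrix (F × F) (F × F) ℂ) (φ ψ : E) : ℂ :=
  (N * (powKet k φ ⊗ₖ (powKet k φ - powKet k ψ))).trace

lemma g_eq (N : Matrix (F × F) (F × F) ℂ) (φ ψ : E) :
    g N φ ψ = ∑ u : F × F, ∑ v : F × F,
      N u v * (powKet k φ v.1 u.1 * (powKet k φ v.2 u.2 - powKet k ψ v.2 u.2)) := by
  simp only [g, Matrix.trace, Matrix.diag, Matrix.mul_apply, Matrix.kroneckerMap_apply,
    Matrix.sub_apply]

lemma continuous_g (N : Matrix (F × F) (F × F) ℂ) :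
    Continuous fun p : E × E => g N p.1 p.2 := by
  have : (fun p : E × E => g N p.1 p.2) = fun p : E × E => ∑ u : F × F, ∑ v : F × F,
      N u v * (powKet k p.1 v.1 u.1 * (powKet k p.1 v.2 u.2 - powKet k p.2 v.2 u.2)) := by
    funext p; exact g_eq N p.1 p.2
  rw [this]
  refine continuous_finset_sum _ fun u _ => continuous_finset_sum _ fun v _ =>
    continuous_const.mul (Continuous.mul ?_ (Continuous.sub ?_ ?_))
  · exact continuous_powKet_entry _ _
  · exact continuous_powKet_entry _ _
  · exact continuous_powKet_entry' _ _

lemma abs_g_le (N : Matrix (F × F) (F × F) ℂ) (φ ψ : E) :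
    ‖g N φ ψ‖ ≤ (∑ u : F × F, ∑ v : F × F, ‖N u v‖) *
      ((‖φ‖ ^ 2) ^ k * ((‖φ‖ ^ 2) ^ k + (‖ψ‖ ^ 2) ^ k)) := by
  rw [g_eq, Finset.sum_mul]
  refine le_trans (norm_sum_le _ _) (Finset.sum_le_sum fun u _ => ?_)
  rw [Finset.sum_mul]
  refine le_trans (norm_sum_le _ _) (Finset.sum_le_sum fun v _ => ?_)
  rw [norm_mul, norm_mul]
  refine mul_le_mul_of_nonneg_left ?_ (norm_nonneg _)
  refine mul_le_mul (abs_powKet_le _ _ _) ?_ (norm_nonneg _)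
    (pow_nonneg (sq_nonneg _) _)
  exact le_trans (norm_sub_le _ _)
    (add_le_add (abs_powKet_le _ _ _) (abs_powKet_le _ _ _))

end Aux5

namespace Aux6
open Aux Aux2 Aux3 Aux4

variable {α₁ β₁ α₂ β₂ γ : Type*} [Fintype α₁] [Fintype β₁] [Fintype α₂] [Fintype β₂] [Fintype γ]
  [DecidableEq α₁] [DecidableEq β₁] [DecidableEq α₂] [DecidableEq β₂] [DecidableEq γ]

lemma posSemidef_sum {n : ℕ} (f : Fin n → Matrix γ γ ℂ) (h : ∀ i, (f i).PosSemidef) :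
    (∑ i, f i).PosSemidef :=
  Finset.sum_induction f Matrix.PosSemidef (fun _ _ ha hb => ha.add hb)
    Matrix.PosSemidef.zero (fun i _ => h i)

lemma sepState_posSemidef {σ : Matrix (α₂ × β₂) (α₂ × β₂) ℂ} (h : IsSeparableState σ) :
    σ.PosSemidef := by
  obtain ⟨n, p, ρ, υ, hp, _, hρ, hυ, rfl⟩ := h
  exact posSemidef_sum _ fun i =>
    posSemidef_real_smul (hp i) (kron_posSemidef (hρ i).1 (hυ i).1)

lemma sepState_trace {σ : Matrix (α₂ × β₂) (α₂ × β₂) ℂ} (h : IsSeparableState σ) :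
    σ.trace = 1 := by
  obtain ⟨n, p, ρ, υ, hp, hsum, hρ, hυ, rfl⟩ := h
  rw [Matrix.trace_sum]
  have : ∀ i, ((p i : ℂ) • (ρ i ⊗ₖ υ i)).trace = (p i : ℂ) := by
    intro i
    rw [Matrix.trace_smul, Matrix.trace_kronecker, (hρ i).2, (hυ i).2, mul_one, smul_eq_mul,
      mul_one]
  rw [Finset.sum_congr rfl fun i _ => this i, ← Complex.ofReal_sum, hsum, Complex.ofReal_one]

lemma condOp_isSeparable {M : Matrix ((α₁ × α₂) × (β₁ × β₂)) ((α₁ × α₂) × (β₁ × β₂)) ℂ}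
    {τ : Matrix (α₂ × β₂) (α₂ × β₂) ℂ}
    (hM : IsSeparableOp M) (hτ : IsSeparableState τ) : IsSeparableOp (condOp M τ) := by
  obtain ⟨n, A, B, hA, hB, rfl⟩ := hM
  obtain ⟨m, p, ρ, υ, hp, _, hρ, hυ, rfl⟩ := hτ
  refine ⟨n * m,
    fun j => (p ((finProdFinEquiv.symm j).2) : ℂ) •
      pt (A ((finProdFinEquiv.symm j).1)) (ρ ((finProdFinEquiv.symm j).2)),
    fun j => pt (B ((finProdFinEquiv.symm j).1)) (υ ((finProdFinEquiv.symm j).2)),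
    fun j => posSemidef_real_smul (hp _) (pt_posSemidef (hA _) (hρ _).1),
    fun j => pt_posSemidef (hB _) (hυ _).1, ?_⟩
  rw [condOp_sum_left]
  rw [← Fintype.sum_equiv (finProdFinEquiv : Fin n × Fin m ≃ Fin (n * m))
    (fun z => (p z.2 : ℂ) • (pt (A z.1) (ρ z.2) ⊗ₖ pt (B z.1) (υ z.2)))
    (fun j => ((p ((finProdFinEquiv.symm j).2) : ℂ) •
      pt (A ((finProdFinEquiv.symm j).1)) (ρ ((finProdFinEquiv.symm j).2))) ⊗ₖ
      pt (B ((finProdFinEquiv.symm j).1)) (υ ((finProdFinEquiv.symm j).2)))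
    (fun z => by simp only [Equiv.symm_apply_apply, Matrix.smul_kronecker])]
  rw [Fintype.sum_prod_type]
  refine Finset.sum_congr rfl fun t _ => ?_
  rw [condOp_sum_right]
  exact Finset.sum_congr rfl fun i _ => by rw [condOp_smul, condOp_kron]

end Aux6

namespace Aux7
open Aux Aux2 Aux3 Aux4 Aux5

variable {d k : ℕ}

local notation "E" => EuclideanSpace ℂ (Fin d)
local notation "F" => (Fin k → Fin d)

variable (μ : Measure (EuclideanSpace ℂ (Fin d))) [IsProbabilityMeasure μ]

lemma ae_norm_one (hsphere : μ {v : E | ‖v‖ = 1}ᶜ = 0) : ∀ᵐ v ∂μ, ‖v‖ = 1 :=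
  ae_iff.mpr (by simpa only [Set.compl_setOf] using hsphere)

lemma integrable_inner (hsphere : μ {v : E | ‖v‖ = 1}ᶜ = 0)
    (N : Matrix (F × F) (F × F) ℂ) (φ : E) :
    Integrable (fun ψ => g N φ ψ) μ := by
  have hc : Continuous fun ψ => g N φ ψ := by
    have hg : (fun ψ : E => g N φ ψ) = fun ψ => ∑ u : F × F, ∑ v : F × F,
        N u v * (powKet k φ v.1 u.1 * (powKet k φ v.2 u.2 - powKet k ψ v.2 u.2)) :=
      funext (g_eq N φ)
    rw [hg]
    exact continuous_finset_sum _ fun u _ => continuous_finset_sum _ fun v _ =>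
      continuous_const.mul (continuous_const.mul
        (continuous_const.sub (continuous_powKet_single _ _)))
  refine MeasureTheory.Integrable.mono'
    (integrable_const ((∑ u : F × F, ∑ v : F × F, ‖N u v‖) *
      ((‖φ‖ ^ 2) ^ k * ((‖φ‖ ^ 2) ^ k + 1)))) hc.aestronglyMeasurable ?_
  filter_upwards [ae_norm_one μ hsphere] with ψ hψ
  have h := abs_g_le N φ ψ
  rw [hψ] at h
  simpa using h

lemma norm_inner_le (hsphere : μ {v : E | ‖v‖ = 1}ᶜ = 0)
    (N : Matrix (F × F) (F × F) ℂ) (φ : E) (hφ : ‖φ‖ = 1) :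
    ‖∫ ψ, g N φ ψ ∂μ‖ ≤ 2 * (∑ u : F × F, ∑ v : F × F, ‖N u v‖) := by
  have habs : ∀ᵐ ψ ∂μ, ‖g N φ ψ‖ ≤ 2 * (∑ u : F × F, ∑ v : F × F, ‖N u v‖) := by
    filter_upwards [ae_norm_one μ hsphere] with ψ hψ
    have h := abs_g_le N φ ψ
    rw [hψ, hφ] at h
    refine h.trans (le_of_eq ?_)
    ring
  simpa using norm_integral_le_of_norm_le_const habs

lemma integrable_outer (hsphere : μ {v : E | ‖v‖ = 1}ᶜ = 0)
    (N : Matrix (F × F) (F × F) ℂ) :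
    Integrable (fun φ => ∫ ψ, g N φ ψ ∂μ) μ := by
  have hm : StronglyMeasurable fun p : E × E => g N p.1 p.2 :=
    (continuous_g N).stronglyMeasurable
  have hsm : StronglyMeasurable fun φ => ∫ ψ, g N φ ψ ∂μ := hm.integral_prod_right'
  refine MeasureTheory.Integrable.mono'
    (integrable_const (2 * (∑ u : F × F, ∑ v : F × F, ‖N u v‖)))
    hsm.aestronglyMeasurable ?_
  filter_upwards [ae_norm_one μ hsphere] with φ hφ
  exact norm_inner_le μ hsphere N φ hφ

end Aux7

open Aux Aux2 Aux3 Aux4 Aux5 Aux6 Aux7 in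
/-- Suppose every separable operator `0 ≤ N ≤ I` on
`(ℂ^d)^{⊗k} ⊗ (ℂ^d)^{⊗k}` satisfies the Haar-averaged bound with constant `t`.
If `σ` is a state on `ℂ^{q_A} ⊗ ℂ^{q_B}` decomposed as `σ = (1+s)σ⁺ − sσ⁻` with `s ≥ 0`
and `σ⁺, σ⁻` separable states, then every separable operator `0 ≤ M ≤ I` on
`((ℂ^d)^{⊗k} ⊗ ℂ^{q_A}) ⊗ ((ℂ^d)^{⊗k} ⊗ ℂ^{q_B})` satisfies the corresponding
Haar-averaged bound with constant `(1+2s)·t`. -/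
theorem separable_with_resource_bound (d k qA qB : ℕ)
    (hd : 0 < d) (hk : 0 < k) (hqA : 0 < qA) (hqB : 0 < qB)
    (μ : Measure (EuclideanSpace ℂ (Fin d))) [IsProbabilityMeasure μ]
    (hsphere : μ {v : EuclideanSpace ℂ (Fin d) | ‖v‖ = 1}ᶜ = 0)
    (hinv : ∀ U : Matrix.unitaryGroup (Fin d) ℂ,
      μ.map (fun v => Matrix.toEuclideanLin (U : Matrix (Fin d) (Fin d) ℂ) v) = μ)
    (t : ℝ) (ht : 0 ≤ t)
    (hN : ∀ N : Matrix ((Fin k → Fin d) × (Fin k → Fin d))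
        ((Fin k → Fin d) × (Fin k → Fin d)) ℂ,
      N.PosSemidef → (1 - N).PosSemidef → IsSeparableOp N →
      ‖∫ φ, ∫ ψ,
          Matrix.trace (N * (powKet k φ ⊗ₖ (powKet k φ - powKet k ψ))) ∂μ ∂μ‖ ≤ t)
    (s : ℝ) (hs : 0 ≤ s)
    (σ σplus σminus : Matrix (Fin qA × Fin qB) (Fin qA × Fin qB) ℂ)
    (hσ : σ.PosSemidef) (hσtr : σ.trace = 1)
    (hplus : IsSeparableState σplus) (hminus : IsSeparableState σminus)
    (hdecomp : σ = ((1 + s : ℝ) : ℂ) • σplus - (s : ℂ) • σminus)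
    (M : Matrix (((Fin k → Fin d) × Fin qA) × ((Fin k → Fin d) × Fin qB))
      (((Fin k → Fin d) × Fin qA) × ((Fin k → Fin d) × Fin qB)) ℂ)
    (hM0 : M.PosSemidef) (hM1 : (1 - M).PosSemidef) (hMsep : IsSeparableOp M) :
    ‖∫ φ, ∫ ψ,
        Matrix.trace
          (M * reorderTensor (powKet k φ ⊗ₖ (powKet k φ - powKet k ψ)) σ) ∂μ ∂μ‖ ≤
      (1 + 2 * s) * t := by
  have hpp := sepState_posSemidef hplus
  have hpt := sepState_trace hplus
  have hmp := sepState_posSemidef hminus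
  have hmt := sepState_trace hminus
  set Np := condOp M σplus with hNp
  set Nm := condOp M σminus with hNm
  have hboundp : ‖∫ φ, ∫ ψ, g Np φ ψ ∂μ ∂μ‖ ≤ t :=
    hN Np (condOp_posSemidef hM0 hpp)
      (one_sub_condOp_posSemidef hM1 hM0.1 hpp hpt) (condOp_isSeparable hMsep hplus)
  have hboundm : ‖∫ φ, ∫ ψ, g Nm φ ψ ∂μ ∂μ‖ ≤ t :=
    hN Nm (condOp_posSemidef hM0 hmp)
      (one_sub_condOp_posSemidef hM1 hM0.1 hmp hmt) (condOp_isSeparable hMsep hminus)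
  have hptwise : ∀ φ ψ : EuclideanSpace ℂ (Fin d),
      (M * reorderTensor (powKet k φ ⊗ₖ (powKet k φ - powKet k ψ)) σ).trace
        = ((1 + s : ℝ) : ℂ) * g Np φ ψ - (s : ℂ) * g Nm φ ψ := by
    intro φ ψ
    rw [trace_condOp, hdecomp, condOp_sub, condOp_smul, condOp_smul, Matrix.sub_mul,
      Matrix.smul_mul, Matrix.smul_mul, Matrix.trace_sub, Matrix.trace_smul, Matrix.trace_smul,
      smul_eq_mul, smul_eq_mul]
    rfl
  have hinner : ∀ φ : EuclideanSpace ℂ (Fin d),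
      (∫ ψ, (M * reorderTensor (powKet k φ ⊗ₖ (powKet k φ - powKet k ψ)) σ).trace ∂μ)
        = ((1 + s : ℝ) : ℂ) * (∫ ψ, g Np φ ψ ∂μ) - (s : ℂ) * ∫ ψ, g Nm φ ψ ∂μ := by
    intro φ
    rw [show (fun ψ => (M * reorderTensor (powKet k φ ⊗ₖ (powKet k φ - powKet k ψ)) σ).trace)
        = fun ψ => ((1 + s : ℝ) : ℂ) * g Np φ ψ - (s : ℂ) * g Nm φ ψ from funext (hptwise φ)]
    rw [integral_sub ((integrable_inner μ hsphere Np φ).const_mul _)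
      ((integrable_inner μ hsphere Nm φ).const_mul _), integral_const_mul, integral_const_mul]
  rw [show (fun φ => ∫ ψ,
        (M * reorderTensor (powKet k φ ⊗ₖ (powKet k φ - powKet k ψ)) σ).trace ∂μ)
      = fun φ => ((1 + s : ℝ) : ℂ) * (∫ ψ, g Np φ ψ ∂μ) - (s : ℂ) * ∫ ψ, g Nm φ ψ ∂μ from
    funext hinner]
  rw [integral_sub ((integrable_outer μ hsphere Np).const_mul _)
    ((integrable_outer μ hsphere Nm).const_mul _), integral_const_mul, integral_const_mul]
  refine le_trans (norm_sub_le _ _) ?_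
  rw [norm_mul, norm_mul, Complex.norm_real,
    Complex.norm_real, Real.norm_of_nonneg (by linarith), Real.norm_of_nonneg hs]
  calc (1 + s) * ‖∫ φ, ∫ ψ, g Np φ ψ ∂μ ∂μ‖ +
        s * ‖∫ φ, ∫ ψ, g Nm φ ψ ∂μ ∂μ‖
      ≤ (1 + s) * t + s * t := by
        refine add_le_add (mul_le_mul_of_nonneg_left hboundp (by linarith))
          (mul_le_mul_of_nonneg_left hboundm hs)
    _ = (1 + 2 * s) * t := by ring
end
end

section
/- For every d×d Hermitian matrix M and all unit vectors ψ, φ ∈ ℂ^d: Tr[SWAP_{ψ'} · M^{⊗2} · SWAP_{φ'} · M^{⊗2}] = Tr[P_{ψ'}^{⊗2} · M^{⊗2} · P_{φ'}^{⊗2} · M^{⊗2}]. -/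
open Matrix
open scoped Kronecker

noncomputable section

/-- The SWAP operator on `ℂ^d ⊗ ℂ^d`, determined by `SWAP (u ⊗ v) = v ⊗ u`. -/
def swapOp (d : ℕ) : Matrix (Fin d × Fin d) (Fin d × Fin d) ℂ :=
  Matrix.of fun i j => if i.1 = j.2 ∧ i.2 = j.1 then (1 : ℂ) else 0

/-- `P_{ψ'} := I − |ψ⟩⟨ψ|`. -/
def Pperp {d : ℕ} (ψ : EuclideanSpace ℂ (Fin d)) : Matrix (Fin d) (Fin d) ℂ :=
  1 - ketbra ψ

/-- `SWAP_{ψ'} := P_{ψ'}^{⊗2} · SWAP · P_{ψ'}^{⊗2}`. -/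
def swapPerp {d : ℕ} (ψ : EuclideanSpace ℂ (Fin d)) :
    Matrix (Fin d × Fin d) (Fin d × Fin d) ℂ :=
  (Pperp ψ ⊗ₖ Pperp ψ) * swapOp d * (Pperp ψ ⊗ₖ Pperp ψ)


lemma swap_mul_kron {d : ℕ} (A B : Matrix (Fin d) (Fin d) ℂ) :
    swapOp d * (A ⊗ₖ B) = (B ⊗ₖ A) * swapOp d := by
  ext ⟨i1, i2⟩ ⟨j1, j2⟩
  simp only [Matrix.mul_apply, swapOp, Matrix.of_apply, Matrix.kroneckerMap_apply,
    Fintype.sum_prod_type, ite_and]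
  simp [Finset.sum_ite_eq, mul_comm]

lemma swap_mul_swap {d : ℕ} : swapOp d * swapOp d = 1 := by
  ext ⟨i1, i2⟩ ⟨j1, j2⟩
  simp only [Matrix.mul_apply, swapOp, Matrix.of_apply, Fintype.sum_prod_type, ite_and]
  simp [Matrix.one_apply, Prod.ext_iff, eq_comm]
  rw [ite_and]

lemma ketbra_idem {d : ℕ} (ψ : EuclideanSpace ℂ (Fin d)) (hψ : ‖ψ‖ = 1) :
    ketbra ψ * ketbra ψ = ketbra ψ := by
  have key : (∑ k, (starRingEnd ℂ) (ψ k) * ψ k) = 1 := by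
    have h := @inner_self_eq_norm_sq_to_K ℂ _ _ _ _ ψ
    rw [hψ] at h
    simp only [PiLp.inner_apply, RCLike.inner_apply] at h
    simpa [mul_comm] using h
  ext i j
  simp only [ketbra, Matrix.mul_apply, Matrix.vecMulVec_apply, Pi.star_apply]
  calc (∑ k, ψ i * star (ψ k) * (ψ k * star (ψ j)))
      = (∑ k, (starRingEnd ℂ) (ψ k) * ψ k) * (ψ i * star (ψ j)) := by
        rw [Finset.sum_mul]; apply Finset.sum_congr rfl; intros; simp only [← starRingEnd_apply]; ring
    _ = ψ i * star (ψ j) := by rw [key, one_mul]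

lemma Pperp_idem {d : ℕ} (ψ : EuclideanSpace ℂ (Fin d)) (hψ : ‖ψ‖ = 1) :
    Pperp ψ * Pperp ψ = Pperp ψ := by
  have h := ketbra_idem ψ hψ
  simp only [Pperp, sub_mul, mul_sub, one_mul, mul_one, h]
  abel

/-- For Hermitian `M` and unit vectors `ψ, φ`:
`Tr[SWAP_{ψ'} M^{⊗2} SWAP_{φ'} M^{⊗2}] = Tr[P_{ψ'}^{⊗2} M^{⊗2} P_{φ'}^{⊗2} M^{⊗2}]`. -/
theorem trace_swapPerp_swapPerp {d : ℕ}
    (M : Matrix (Fin d) (Fin d) ℂ) (hM : M.IsHermitian)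
    (ψ φ : EuclideanSpace ℂ (Fin d)) (hψ : ‖ψ‖ = 1) (hφ : ‖φ‖ = 1) :
    Matrix.trace (swapPerp ψ * (M ⊗ₖ M) * swapPerp φ * (M ⊗ₖ M)) =
      Matrix.trace ((Pperp ψ ⊗ₖ Pperp ψ) * (M ⊗ₖ M) * (Pperp φ ⊗ₖ Pperp φ) * (M ⊗ₖ M)) := by
  have hQψ : (Pperp ψ ⊗ₖ Pperp ψ) * (Pperp ψ ⊗ₖ Pperp ψ) = (Pperp ψ ⊗ₖ Pperp ψ) := by
    rw [← Matrix.mul_kronecker_mul, Pperp_idem ψ hψ]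
  have hQφ : (Pperp φ ⊗ₖ Pperp φ) * (Pperp φ ⊗ₖ Pperp φ) = (Pperp φ ⊗ₖ Pperp φ) := by
    rw [← Matrix.mul_kronecker_mul, Pperp_idem φ hφ]
  have hψS : swapPerp ψ = (Pperp ψ ⊗ₖ Pperp ψ) * swapOp d := by
    rw [swapPerp, mul_assoc, swap_mul_kron, ← mul_assoc, hQψ]
  have hφS : swapPerp φ = swapOp d * (Pperp φ ⊗ₖ Pperp φ) := by
    rw [swapPerp, mul_assoc, swap_mul_kron, ← mul_assoc, hQφ]
  congr 1
  rw [hψS, hφS]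
  calc (Pperp ψ ⊗ₖ Pperp ψ) * swapOp d * (M ⊗ₖ M) * (swapOp d * (Pperp φ ⊗ₖ Pperp φ)) * (M ⊗ₖ M)
      = (Pperp ψ ⊗ₖ Pperp ψ) * (M ⊗ₖ M) * (swapOp d * swapOp d) * (Pperp φ ⊗ₖ Pperp φ) * (M ⊗ₖ M) := by
        rw [mul_assoc ((Pperp ψ ⊗ₖ Pperp ψ)) (swapOp d) (M ⊗ₖ M), swap_mul_kron]
        simp only [mul_assoc]
    _ = (Pperp ψ ⊗ₖ Pperp ψ) * (M ⊗ₖ M) * (Pperp φ ⊗ₖ Pperp φ) * (M ⊗ₖ M) := by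
        rw [swap_mul_swap, mul_one]
end
end
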